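/- arXiv:1102.3503 — 3 statements merged into one kernel-verified Lean document; each statement's English description precedes it below -/
import Mathlib

section
/- The family of context-free languages is closed under iterated m-bounded k-hairpin incompletion: if L is context-free, then HI*_{m,k}(L) is context-free, for all m, k ≥ 1. -/
open scoped Classical

namespace Hairpin

variable {V : Type}

/-- Reversed complement of a word under the involution `bar`. -/
def rc (bar : V → V) (w : List V) : List V := (w.map bar).reverse

/-- `w` admits a right hairpin decomposition `w = δγαβᾱ^R` with `|α| = k`, `|γ| ≤ m`. -/
def hasRightDecomp (bar : V → V) (m k : ℕ) (w : List V) : Prop :=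
  ∃ δ γ α β : List V, w = δ ++ γ ++ α ++ β ++ rc bar α ∧ α.length = k ∧ γ.length ≤ m

def hasLeftDecomp (bar : V → V) (m k : ℕ) (w : List V) : Prop :=
  ∃ α β γ δ : List V, w = α ++ β ++ rc bar α ++ γ ++ δ ∧ α.length = k ∧ γ.length ≤ m

/-- m-bounded right k-hairpin incompletion. -/
noncomputable def rHI (bar : V → V) (m k : ℕ) (w : List V) : Set (List V) :=
  if hasRightDecomp bar m k w then
    { v | ∃ δ γ α β : List V, w = δ ++ γ ++ α ++ β ++ rc bar α ∧ α.length = k ∧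
          γ.length ≤ m ∧ v = w ++ rc bar γ }
  else {w}

/-- m-bounded left k-hairpin incompletion. -/
noncomputable def lHI (bar : V → V) (m k : ℕ) (w : List V) : Set (List V) :=
  if hasLeftDecomp bar m k w then
    { v | ∃ α β γ δ : List V, w = α ++ β ++ rc bar α ++ γ ++ δ ∧ α.length = k ∧
          γ.length ≤ m ∧ v = rc bar γ ++ w }
  else {w}

/-- m-bounded k-hairpin incompletion. -/
noncomputable def HI (bar : V → V) (m k : ℕ) (w : List V) : Set (List V) :=
  rHI bar m k w ∪ lHI bar m k w

noncomputable def rHIn (bar : V → V) (m k : ℕ) (w : List V) : ℕ → Set (List V)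
  | 0 => {w}
  | n + 1 => ⋃ v ∈ rHIn bar m k w n, rHI bar m k v

noncomputable def rHIstar (bar : V → V) (m k : ℕ) (w : List V) : Set (List V) :=
  ⋃ n, rHIn bar m k w n

noncomputable def HIn (bar : V → V) (m k : ℕ) (w : List V) : ℕ → Set (List V)
  | 0 => {w}
  | n + 1 => ⋃ v ∈ HIn bar m k w n, HI bar m k v

noncomputable def HIstar (bar : V → V) (m k : ℕ) (w : List V) : Set (List V) :=
  ⋃ n, HIn bar m k w n

noncomputable def rHIstarL (bar : V → V) (m k : ℕ) (L : Set (List V)) : Set (List V) :=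
  ⋃ w ∈ L, rHIstar bar m k w

noncomputable def HIL (bar : V → V) (m k : ℕ) (L : Set (List V)) : Set (List V) :=
  ⋃ w ∈ L, HI bar m k w

noncomputable def HIstarL (bar : V → V) (m k : ℕ) (L : Set (List V)) : Set (List V) :=
  ⋃ w ∈ L, HIstar bar m k w

/-- The set `C_{m,k}(w)`. -/
def Cmk (bar : V → V) (m k : ℕ) (w : List V) : Set (List V × List V) :=
  { p | ∃ x y w₁ w₂ z : List V,
      x.length ≤ m ∧ y.length = k ∧ w = w₁ ++ (x ++ y) ++ w₂ ∧
      z.length ≤ k ∧ z <:+ w₂ ∧ z <+: rc bar y ∧ p = (x ++ y, z) }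

/-- The suffix component of `D_{m,k}(w)`: all suffixes of `w` of length `i+k-1`, `0 ≤ i ≤ m`. -/
def DmkSuf (m k : ℕ) (w : List V) : Set (List V) :=
  { s | ∃ i ≤ m, s.length = i + k - 1 ∧ s <:+ w }

noncomputable def Dmk (bar : V → V) (m k : ℕ) (w : List V) :
    Set (List V × List V) × Set (List V) :=
  (Cmk bar m k w, DmkSuf m k w)

/-- The set `C'_{m,k}(w)`. -/
def Cmk' (bar : V → V) (m k : ℕ) (w : List V) : Set (List V × List V) :=
  { p | ∃ x y w₁ w₂ z : List V,
      x.length ≤ m ∧ y.length = k ∧ w = w₁ ++ (y ++ x) ++ w₂ ∧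
      z.length ≤ k ∧ z <+: w₁ ∧ z <:+ rc bar y ∧ p = (z, y ++ x) }

/-- The prefix component of `D'_{m,k}(w)`. -/
def DmkPref (m k : ℕ) (w : List V) : Set (List V) :=
  { s | ∃ i ≤ m, s.length = i + k - 1 ∧ s <+: w }

noncomputable def Dmk' (bar : V → V) (m k : ℕ) (w : List V) :
    Set (List V × List V) × Set (List V) :=
  (Cmk' bar m k w, DmkPref m k w)

noncomputable def Emk (bar : V → V) (m k : ℕ) (w : List V) :=
  (Dmk bar m k w, Dmk' bar m k w)


/-- View a set of words as a `Language`. -/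
def lang {V : Type} (L : Set (List V)) : Language V := L

/-! ### Part 1: basic lemmas -/

section Basics
variable {V : Type} (bar : V → V)

lemma rc_nil : rc bar ([] : List V) = [] := rfl

lemma rc_length (u : List V) : (rc bar u).length = u.length := by
  simp [rc]

lemma rc_rc (hbar : ∀ a, bar (bar a) = a) (u : List V) : rc bar (rc bar u) = u := by
  simp [rc, List.map_reverse, List.map_map, Function.comp_def, hbar]

/-- last `n` letters -/
def lastN (n : ℕ) (u : List V) : List V := u.drop (u.length - n)

lemma lastN_suffix (n : ℕ) (u : List V) : lastN n u <:+ u := List.drop_suffix _ _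

lemma lastN_length (n : ℕ) (u : List V) (h : n ≤ u.length) : (lastN n u).length = n := by
  simp [lastN]; omega

lemma lastN_append (n : ℕ) (x s : List V) (h : n ≤ s.length) :
    lastN n (x ++ s) = lastN n s := by
  unfold lastN
  have h1 : (x ++ s).length - n = x.length + (s.length - n) := by
    simp [List.length_append]; omega
  rw [h1, List.drop_append]
  simp

lemma firstN_append (n : ℕ) (s x : List V) (h : n ≤ s.length) :
    (s ++ x).take n = s.take n := List.take_append_of_le_length h

/-- The right-decomposition witnessing a given `γ = g`. -/
def REdec (k : ℕ) (u g : List V) : Prop :=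
  ∃ δ α β : List V, u = δ ++ g ++ α ++ β ++ rc bar α ∧ α.length = k

def LEdec (k : ℕ) (u g : List V) : Prop :=
  ∃ α β δ : List V, u = α ++ β ++ rc bar α ++ g ++ δ ∧ α.length = k

variable {bar}

lemma mem_rHI_iff {m k : ℕ} {u v : List V} :
    v ∈ rHI bar m k u ↔ v = u ∨ ∃ g, g.length ≤ m ∧ REdec bar k u g ∧ v = u ++ rc bar g := by
  unfold rHI
  by_cases h : hasRightDecomp bar m k u
  · rw [if_pos h]
    constructor
    · rintro ⟨δ, γ, α, β, hu, hα, hγ, hv⟩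
      exact Or.inr ⟨γ, hγ, ⟨δ, α, β, hu, hα⟩, hv⟩
    · rintro (rfl | ⟨g, hg, ⟨δ, α, β, hu, hα⟩, hv⟩)
      · obtain ⟨δ, γ, α, β, hu, hα, hγ⟩ := h
        refine ⟨δ ++ γ, [], α, β, ?_, hα, by simp, by simp [rc]⟩
        simp [hu]
      · exact ⟨δ, g, α, β, hu, hα, hg, hv⟩
  · rw [if_neg h]
    simp only [Set.mem_singleton_iff]
    constructor
    · exact Or.inl
    · rintro (rfl | ⟨g, hg, ⟨δ, α, β, hu, hα⟩, hv⟩)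
      · rfl
      · exact absurd ⟨δ, g, α, β, hu, hα, hg⟩ h

lemma mem_lHI_iff {m k : ℕ} {u v : List V} :
    v ∈ lHI bar m k u ↔ v = u ∨ ∃ g, g.length ≤ m ∧ LEdec bar k u g ∧ v = rc bar g ++ u := by
  unfold lHI
  by_cases h : hasLeftDecomp bar m k u
  · rw [if_pos h]
    constructor
    · rintro ⟨α, β, γ, δ, hu, hα, hγ, hv⟩
      exact Or.inr ⟨γ, hγ, ⟨α, β, δ, hu, hα⟩, hv⟩
    · rintro (rfl | ⟨g, hg, ⟨α, β, δ, hu, hα⟩, hv⟩)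
      · obtain ⟨α, β, γ, δ, hu, hα, hγ⟩ := h
        refine ⟨α, β, [], γ ++ δ, ?_, hα, by simp, by simp [rc]⟩
        simp [hu]
      · exact ⟨α, β, g, δ, hu, hα, hg, hv⟩
  · rw [if_neg h]
    simp only [Set.mem_singleton_iff]
    constructor
    · exact Or.inl
    · rintro (rfl | ⟨g, hg, ⟨α, β, δ, hu, hα⟩, hv⟩)
      · rfl
      · exact absurd ⟨α, β, g, δ, hu, hα, hg⟩ h

lemma mem_HI_iff {m k : ℕ} {u v : List V} :
    v ∈ HI bar m k u ↔ v = u ∨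
      (∃ g, g.length ≤ m ∧ REdec bar k u g ∧ v = u ++ rc bar g) ∨
      (∃ g, g.length ≤ m ∧ LEdec bar k u g ∧ v = rc bar g ++ u) := by
  unfold HI
  rw [Set.mem_union, mem_rHI_iff, mem_lHI_iff, or_or_or_comm, or_self]

lemma self_mem_HI {m k : ℕ} (u : List V) : u ∈ HI bar m k u :=
  mem_HI_iff.2 (Or.inl rfl)

end Basics

/-! ### Part 2: infix characterization of decompositions -/

section Infix
variable {V : Type} {bar : V → V} {m k : ℕ}

lemma REdec_iff (hbar : ∀ a, bar (bar a) = a) (u g : List V) :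
    REdec bar k u g ↔ ∃ t : List V, t.length = k ∧ (g ++ rc bar (lastN k u) ++ t) <:+: u := by
  constructor
  · rintro ⟨δ, α, β, hu, hα⟩
    have hlen : (rc bar α).length = k := by rw [rc_length, hα]
    have hsfx : lastN k u = rc bar α := by
      have h2 : u = (δ ++ g ++ α ++ β) ++ rc bar α := by simp [hu]
      rw [h2, lastN_append k _ _ (le_of_eq hlen.symm)]
      unfold lastN; rw [hlen]; simp
    refine ⟨(β ++ rc bar α).take k, ?_, δ, (β ++ rc bar α).drop k, ?_⟩
    · rw [List.length_take, List.length_append, hlen]; omega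
    · rw [hsfx, rc_rc bar hbar]
      calc δ ++ (g ++ α ++ (β ++ rc bar α).take k) ++ (β ++ rc bar α).drop k
          = δ ++ g ++ α ++ ((β ++ rc bar α).take k ++ (β ++ rc bar α).drop k) := by simp
        _ = δ ++ g ++ α ++ (β ++ rc bar α) := by rw [List.take_append_drop]
        _ = u := by simp [hu]
  · rintro ⟨t, ht, p, q, hu⟩
    set s : List V := t ++ q with hs
    have hsk : k ≤ s.length := by rw [hs, List.length_append, ht]; omega
    have hus : u = (p ++ g ++ rc bar (lastN k u)) ++ s := by
      conv_lhs => rw [← hu]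
      simp [hs]
    have hlast : lastN k u = lastN k s := by rw [hus, lastN_append k _ _ hsk]
    have hrr : rc bar (rc bar (lastN k u)) = lastN k u := rc_rc bar hbar _
    refine ⟨p, rc bar (lastN k u), s.take (s.length - k), ?_, ?_⟩
    · calc u = (p ++ g ++ rc bar (lastN k u)) ++ s := hus
        _ = (p ++ g ++ rc bar (lastN k u)) ++ (s.take (s.length - k) ++ s.drop (s.length - k)) := by
              rw [List.take_append_drop]
        _ = p ++ g ++ rc bar (lastN k u) ++ s.take (s.length - k) ++ lastN k s := by
              unfold lastN; simp
        _ = _ := by rw [hrr, hlast]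
    · rw [rc_length, lastN_length k u]
      rw [hus, List.length_append]; omega

lemma LEdec_iff (u g : List V) :
    LEdec bar k u g ↔ ∃ s : List V, s.length = k ∧ (s ++ rc bar (u.take k) ++ g) <:+: u := by
  constructor
  · rintro ⟨α, β, δ, hu, hα⟩
    have htk : u.take k = α := by
      have h2 : u = α ++ (β ++ rc bar α ++ g ++ δ) := by simp [hu]
      rw [h2, ← hα, List.take_left]
    have hab : k ≤ (α ++ β).length := by rw [List.length_append]; omega
    refine ⟨lastN k (α ++ β), lastN_length _ _ hab, (α ++ β).take ((α ++ β).length - k), δ, ?_⟩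
    rw [htk]
    calc (α ++ β).take ((α ++ β).length - k) ++ (lastN k (α ++ β) ++ rc bar α ++ g) ++ δ
        = ((α ++ β).take ((α ++ β).length - k) ++ lastN k (α ++ β)) ++ rc bar α ++ g ++ δ := by
          simp
      _ = (α ++ β) ++ rc bar α ++ g ++ δ := by unfold lastN; rw [List.take_append_drop]
      _ = u := by simp [hu]
  · rintro ⟨s, hs, p, q, hu⟩
    set x : List V := p ++ s with hx
    have hxk : k ≤ x.length := by rw [hx, List.length_append, hs]; omega
    have hux : u = x ++ (rc bar (u.take k) ++ g ++ q) := by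
      conv_lhs => rw [← hu]
      simp [hx]
    have htk : u.take k = x.take k := by rw [hux, List.take_append_of_le_length hxk]
    have hα : (u.take k).length = k := by
      rw [htk, List.length_take]; omega
    refine ⟨u.take k, x.drop k, q, ?_, hα⟩
    calc u = x ++ (rc bar (u.take k) ++ g ++ q) := hux
      _ = (x.take k ++ x.drop k) ++ (rc bar (u.take k) ++ g ++ q) := by rw [List.take_append_drop]
      _ = _ := by rw [← htk]; simp
end Infix

/-! ### Part 3: profiles -/

section Profile
variable {V : Type}

/-- Factors of length at most `m + 2k`. -/
def FactW (m k : ℕ) (u : List V) : Set (List V) := {p | p.length ≤ m + 2*k ∧ p <:+: u}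

/-- The profile of a word: either the word itself (if short), or the first and last
windows together with the set of bounded-length factors. -/
def Prof (V : Type) : Type := List V ⊕ (List V × List V × Set (List V))

def prof (m k : ℕ) (u : List V) : Prof V :=
  if u.length < m + 2*k then .inl u
  else .inr (u.take (m + 2*k), lastN (m + 2*k) u, FactW m k u)

def updR (m k : ℕ) (a : V) (P : Prof V) : Prof V :=
  match P with
  | .inl u => prof m k (u ++ [a])
  | .inr (pw, sw, F) =>
      .inr (pw, lastN (m + 2*k) (sw ++ [a]),
        F ∪ {p | p.length ≤ m + 2*k ∧ p <:+ (sw ++ [a])})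

def updL (m k : ℕ) (a : V) (P : Prof V) : Prof V :=
  match P with
  | .inl u => prof m k (a :: u)
  | .inr (pw, sw, F) =>
      .inr ((a :: pw).take (m + 2*k), sw,
        F ∪ {p | p.length ≤ m + 2*k ∧ p <+: (a :: pw)})

def updW (m k : ℕ) (P : Prof V) (w : List V) : Prof V := w.foldl (fun P a => updR m k a P) P

def updWL (m k : ℕ) (w : List V) (P : Prof V) : Prof V := w.foldr (fun a P => updL m k a P) P

variable {m k : ℕ}

lemma lastN_snoc_window {u : List V} {a : V} (h : m + 2*k ≤ u.length) :
    lastN (m + 2*k) (u ++ [a]) = lastN (m + 2*k) (lastN (m + 2*k) u ++ [a]) := by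
  have hu : u = u.take (u.length - (m + 2*k)) ++ lastN (m + 2*k) u := by
    unfold lastN; rw [List.take_append_drop]
  have hlen : m + 2*k ≤ (lastN (m + 2*k) u ++ [a]).length := by
    rw [List.length_append, lastN_length _ _ h]; simp
  calc lastN (m + 2*k) (u ++ [a])
      = lastN (m + 2*k) (u.take (u.length - (m + 2*k)) ++ (lastN (m + 2*k) u ++ [a])) := by
        conv_lhs => rw [hu]
        rw [List.append_assoc]
    _ = _ := lastN_append _ _ _ hlen

lemma window_snoc_suffix {u : List V} {a : V} (h : m + 2*k ≤ u.length) :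
    lastN (m + 2*k) u ++ [a] <:+ u ++ [a] := by
  obtain ⟨y, hy⟩ := lastN_suffix (m + 2*k) u
  exact ⟨y, by rw [← List.append_assoc, hy]⟩

lemma FactW_snoc {u : List V} {a : V} (h : m + 2*k ≤ u.length) :
    FactW m k (u ++ [a]) =
      FactW m k u ∪ {p | p.length ≤ m + 2*k ∧ p <:+ (lastN (m + 2*k) u ++ [a])} := by
  ext p
  constructor
  · rintro ⟨hp, l, r, hlr⟩
    rcases List.eq_nil_or_concat r with rfl | ⟨r₀, b, rfl⟩
    · right
      refine ⟨hp, ?_⟩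
      have hsuf : p <:+ u ++ [a] := ⟨l, by simpa using hlr⟩
      refine List.suffix_of_suffix_length_le hsuf (window_snoc_suffix h) ?_
      rw [List.length_append, lastN_length _ _ h]; simp; omega
    · left
      have h' : (l ++ p ++ r₀) ++ [b] = u ++ [a] := by simpa using hlr
      have h2 := congrArg List.dropLast h'
      rw [List.dropLast_concat, List.dropLast_concat] at h2
      exact ⟨hp, l, r₀, h2⟩
  · rintro (⟨hp, l, r, hlr⟩ | ⟨hp, hx⟩)
    · exact ⟨hp, l, r ++ [a], by rw [← List.append_assoc, hlr]⟩
    · exact ⟨hp, (hx.trans (window_snoc_suffix h)).isInfix⟩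

lemma window_cons_prefix {u : List V} {a : V} :
    a :: u.take (m + 2*k) <+: a :: u := by
  exact List.cons_prefix_cons.2 ⟨rfl, List.take_prefix _ _⟩

lemma FactW_cons {u : List V} {a : V} (h : m + 2*k ≤ u.length) :
    FactW m k (a :: u) =
      FactW m k u ∪ {p | p.length ≤ m + 2*k ∧ p <+: (a :: u.take (m + 2*k))} := by
  ext p
  constructor
  · rintro ⟨hp, hinf⟩
    rcases List.infix_cons_iff.1 hinf with hpre | hinf'
    · right
      refine ⟨hp, List.prefix_of_prefix_length_le hpre window_cons_prefix ?_⟩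
      simp [List.length_take]; omega
    · exact Or.inl ⟨hp, hinf'⟩
  · rintro (⟨hp, hinf⟩ | ⟨hp, hx⟩)
    · exact ⟨hp, hinf.trans (List.infix_cons_iff.2 (Or.inr (List.infix_refl u)))⟩
    · exact ⟨hp, (hx.trans window_cons_prefix).isInfix⟩

end Profile

section Profile2
variable {V : Type} {m k : ℕ}

lemma prof_snoc (hk : 1 ≤ k) (u : List V) (a : V) :
    prof m k (u ++ [a]) = updR m k a (prof m k u) := by
  by_cases h : u.length < m + 2*k
  · rw [show prof m k u = .inl u from if_pos h]
    rfl
  · push_neg at h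
    rw [show prof m k u = _ from if_neg (not_lt.2 h)]
    unfold updR
    have h' : ¬ (u ++ [a]).length < m + 2*k := by
      rw [List.length_append]; simp; omega
    rw [show prof m k (u ++ [a]) = _ from if_neg h']
    congr 1
    refine Prod.ext ?_ (Prod.ext ?_ ?_)
    · simp only
      exact List.take_append_of_le_length h
    · simp only
      exact lastN_snoc_window h
    · simp only
      exact FactW_snoc h

lemma prof_cons (hk : 1 ≤ k) (u : List V) (a : V) :
    prof m k (a :: u) = updL m k a (prof m k u) := by
  by_cases h : u.length < m + 2*k
  · rw [show prof m k u = .inl u from if_pos h]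
    rfl
  · push_neg at h
    rw [show prof m k u = _ from if_neg (not_lt.2 h)]
    unfold updL
    have h' : ¬ (a :: u).length < m + 2*k := by simp; omega
    rw [show prof m k (a :: u) = _ from if_neg h']
    congr 1
    refine Prod.ext ?_ (Prod.ext ?_ ?_)
    · simp only
      obtain ⟨n, hn⟩ : ∃ n, m + 2*k = n + 1 := ⟨m + 2*k - 1, by omega⟩
      rw [hn]
      simp [List.take_take]
    · simp only
      exact (lastN_append _ [a] u h).symm ▸ rfl
    · simp only
      exact FactW_cons h

lemma prof_appendW (hk : 1 ≤ k) (u w : List V) :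
    prof m k (u ++ w) = updW m k (prof m k u) w := by
  induction w generalizing u with
  | nil => simp [updW]
  | cons a w ih =>
      have : u ++ a :: w = (u ++ [a]) ++ w := by simp
      rw [this, ih, prof_snoc hk]
      rfl

lemma prof_prependW (hk : 1 ≤ k) (w u : List V) :
    prof m k (w ++ u) = updWL m k w (prof m k u) := by
  induction w with
  | nil => simp [updWL]
  | cons a w ih =>
      rw [List.cons_append, prof_cons hk, ih]
      rfl

lemma updW_append (P : Prof V) (w₁ w₂ : List V) :
    updW m k P (w₁ ++ w₂) = updW m k (updW m k P w₁) w₂ := by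
  simp [updW, List.foldl_append]

/-- Profile-level right-enabledness. -/
def profRE (bar : V → V) (m k : ℕ) (P : Prof V) (g : List V) : Prop :=
  match P with
  | .inl u => REdec bar k u g
  | .inr (_, sw, F) => ∃ t : List V, t.length = k ∧ (g ++ rc bar (lastN k sw) ++ t) ∈ F

def profLE (bar : V → V) (m k : ℕ) (P : Prof V) (g : List V) : Prop :=
  match P with
  | .inl u => LEdec bar k u g
  | .inr (pw, _, F) => ∃ s : List V, s.length = k ∧ (s ++ rc bar (pw.take k) ++ g) ∈ F

lemma profRE_iff {bar : V → V} (hbar : ∀ a, bar (bar a) = a) {u g : List V}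
    (hg : g.length ≤ m) :
    profRE bar m k (prof m k u) g ↔ REdec bar k u g := by
  by_cases h : u.length < m + 2*k
  · rw [show prof m k u = .inl u from if_pos h]; rfl
  · push_neg at h
    rw [show prof m k u = _ from if_neg (not_lt.2 h)]
    rw [REdec_iff hbar]
    unfold profRE
    have hkN : k ≤ m + 2*k := by omega
    have hlast : lastN k (lastN (m + 2*k) u) = lastN k u := by
      have hu : u = u.take (u.length - (m + 2*k)) ++ lastN (m + 2*k) u := by
        unfold lastN; rw [List.take_append_drop]
      conv_rhs => rw [hu]
      rw [lastN_append _ _ _ (le_trans hkN (le_of_eq (lastN_length _ _ h).symm))]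
    simp only [hlast]
    constructor
    · rintro ⟨t, ht, _, hinf⟩
      exact ⟨t, ht, hinf⟩
    · rintro ⟨t, ht, hinf⟩
      refine ⟨t, ht, ?_, hinf⟩
      have h1 : (rc bar (lastN k u)).length = k := by
        rw [rc_length, lastN_length _ _ (by omega)]
      rw [List.length_append, List.length_append, h1, ht]
      omega

lemma profLE_iff {bar : V → V} {u g : List V} (hg : g.length ≤ m) :
    profLE bar m k (prof m k u) g ↔ LEdec bar k u g := by
  by_cases h : u.length < m + 2*k
  · rw [show prof m k u = .inl u from if_pos h]; rfl
  · push_neg at h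
    rw [show prof m k u = _ from if_neg (not_lt.2 h)]
    rw [LEdec_iff]
    unfold profLE
    have htk : (u.take (m + 2*k)).take k = u.take k := by
      rw [List.take_take]
      congr 1
      omega
    simp only [htk]
    constructor
    · rintro ⟨s, hs, _, hinf⟩
      exact ⟨s, hs, hinf⟩
    · rintro ⟨s, hs, hinf⟩
      refine ⟨s, hs, ?_, hinf⟩
      have h1 : (rc bar (u.take k)).length = k := by
        rw [rc_length, List.length_take]
        omega
      rw [List.length_append, List.length_append, h1, hs]
      omega

lemma range_prof_finite [Finite V] : (Set.range (prof m k : List V → Prof V)).Finite := by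
  have h1 : (Set.range (prof m k : List V → Prof V)) ⊆
      (Sum.inl '' {u : List V | u.length < m + 2*k}) ∪
      (Sum.inr '' ({pw : List V | pw.length ≤ m + 2*k} ×ˢ
        ({sw : List V | sw.length ≤ m + 2*k} ×ˢ
          {F : Set (List V) | F ⊆ {p : List V | p.length ≤ m + 2*k}}))) := by
    rintro P ⟨u, rfl⟩
    by_cases h : u.length < m + 2*k
    · left
      exact ⟨u, h, (if_pos h).symm⟩
    · right
      push_neg at h
      refine ⟨(u.take (m + 2*k), lastN (m + 2*k) u, FactW m k u), ?_, (if_neg (not_lt.2 h)).symm⟩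
      refine ⟨by simp, by rw [Set.mem_prod]; exact ⟨by simp [lastN_length _ _ h], fun p hp => hp.1⟩⟩
  refine Set.Finite.subset (Set.Finite.union ?_ ?_) h1
  · exact (List.finite_length_lt V (m + 2*k)).image _
  · refine Set.Finite.image _ ?_
    refine Set.Finite.prod (List.finite_length_le V (m + 2*k)) ?_
    refine Set.Finite.prod (List.finite_length_le V (m + 2*k)) ?_
    exact (List.finite_length_le V (m + 2*k)).finite_subsets

end Profile2

/-! ### Part 4: reachability characterization of `HIstar` -/

section Reach
variable {V : Type}

inductive Reach (bar : V → V) (m k : ℕ) (P : Prof V) : Prof V → List V → List V → Prop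
  | refl : Reach bar m k P P [] []
  | right {Q x y g} : Reach bar m k P Q x y → g.length ≤ m → profRE bar m k Q g →
      Reach bar m k P (updW m k Q (rc bar g)) x (y ++ rc bar g)
  | left {Q x y g} : Reach bar m k P Q x y → g.length ≤ m → profLE bar m k Q g →
      Reach bar m k P (updWL m k (rc bar g) Q) (rc bar g ++ x) y

variable {bar : V → V} {m k : ℕ}

lemma Reach_prof (hk : 1 ≤ k) {w : List V} {Q x y} :
    Reach bar m k (prof m k w) Q x y → prof m k (x ++ w ++ y) = Q := by
  intro h
  induction h with
  | refl => simp
  | @right Q' x' y' g h hg hre ih =>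
      have e : x' ++ w ++ (y' ++ rc bar g) = (x' ++ w ++ y') ++ rc bar g := by simp
      rw [e, prof_appendW hk, ih]
  | @left Q' x' y' g h hg hle ih =>
      have e : rc bar g ++ x' ++ w ++ y' = rc bar g ++ (x' ++ w ++ y') := by simp
      rw [e, prof_prependW hk, ih]

lemma mem_HIstar_iff {w v : List V} :
    v ∈ HIstar bar m k w ↔ ∃ n, v ∈ HIn bar m k w n := Set.mem_iUnion

lemma self_mem_HIstar (w : List V) : w ∈ HIstar bar m k w :=
  mem_HIstar_iff.2 ⟨0, rfl⟩

lemma HIstar_step {w v v' : List V} (h : v ∈ HIstar bar m k w) (h' : v' ∈ HI bar m k v) :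
    v' ∈ HIstar bar m k w := by
  obtain ⟨n, hn⟩ := mem_HIstar_iff.1 h
  exact mem_HIstar_iff.2 ⟨n + 1, Set.mem_biUnion hn h'⟩

theorem mem_HIstar_iff_reach (hbar : ∀ a, bar (bar a) = a) (hk : 1 ≤ k) {w v : List V} :
    v ∈ HIstar bar m k w ↔
      ∃ x y Q, v = x ++ w ++ y ∧ Reach bar m k (prof m k w) Q x y := by
  have main : ∀ n (v : List V), v ∈ HIn bar m k w n →
      ∃ x y Q, v = x ++ w ++ y ∧ Reach bar m k (prof m k w) Q x y := by
    intro n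
    induction n with
    | zero =>
        intro v hn
        rw [show v ∈ HIn bar m k w 0 ↔ v = w from Iff.rfl] at hn
        exact ⟨[], [], prof m k w, by simp [hn], Reach.refl⟩
    | succ n ih =>
        intro v hn
        obtain ⟨u, hu, hv⟩ := Set.mem_iUnion₂.1 hn
        obtain ⟨x, y, Q, rfl, hr⟩ := ih u hu
        have hQ : prof m k (x ++ w ++ y) = Q := Reach_prof hk hr
        rcases mem_HI_iff.1 hv with rfl | ⟨g, hg, hre, rfl⟩ | ⟨g, hg, hle, rfl⟩
        · exact ⟨x, y, Q, rfl, hr⟩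
        · refine ⟨x, y ++ rc bar g, updW m k Q (rc bar g), by simp, ?_⟩
          exact Reach.right hr hg (hQ ▸ (profRE_iff hbar hg).2 hre)
        · refine ⟨rc bar g ++ x, y, updWL m k (rc bar g) Q, by simp, ?_⟩
          exact Reach.left hr hg (hQ ▸ (profLE_iff hg).2 hle)
  constructor
  · intro h
    obtain ⟨n, hn⟩ := mem_HIstar_iff.1 h
    exact main n v hn
  · rintro ⟨x, y, Q, rfl, hr⟩
    induction hr with
    | refl => simpa using self_mem_HIstar w
    | @right Q x y g h hg hre ih =>
        have hQ : prof m k (x ++ w ++ y) = Q := Reach_prof hk h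
        refine HIstar_step ih (mem_HI_iff.2 (Or.inr (Or.inl ⟨g, hg, ?_, by simp⟩)))
        exact (profRE_iff hbar hg).1 (hQ ▸ hre)
    | @left Q x y g h hg hle ih =>
        have hQ : prof m k (x ++ w ++ y) = Q := Reach_prof hk h
        refine HIstar_step ih (mem_HI_iff.2 (Or.inr (Or.inr ⟨g, hg, ?_, by simp⟩)))
        exact (profLE_iff hg).1 (hQ ▸ hle)

end Reach

/-! ### Part 5: generic grammar machinery -/

section CFG
variable {T : Type}

open ContextFreeGrammar

/-- Interpretation of a symbol as a language. -/
def symLang {N : Type} (σ : N → Language T) : Symbol T N → Language T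
  | .terminal a => {[a]}
  | .nonterminal A => σ A

/-- Interpretation of a string of symbols as a language. -/
def listLang {N : Type} (σ : N → Language T) : List (Symbol T N) → Language T
  | [] => 1
  | s :: rest => symLang σ s * listLang σ rest

lemma listLang_append {N : Type} (σ : N → Language T) (l₁ l₂ : List (Symbol T N)) :
    listLang σ (l₁ ++ l₂) = listLang σ l₁ * listLang σ l₂ := by
  induction l₁ with
  | nil => simp [listLang]
  | cons s l ih => rw [List.cons_append, listLang, listLang, ih, mul_assoc]

lemma listLang_singleton {N : Type} (σ : N → Language T) (s : Symbol T N) :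
    listLang σ [s] = symLang σ s := mul_one _

lemma mem_listLang_terminals {N : Type} (σ : N → Language T) (w : List T) :
    w ∈ listLang σ (w.map .terminal) := by
  induction w with
  | nil => exact Language.mem_one [] |>.2 rfl
  | cons a w ih =>
      exact Language.mem_mul.2 ⟨[a], rfl, w, ih, rfl⟩

lemma listLang_terminals_eq {N : Type} (σ : N → Language T) {w t : List T} :
    w ∈ listLang σ (t.map .terminal) → w = t := by
  induction t generalizing w with
  | nil => intro h; exact (Language.mem_one w).1 h
  | cons a t ih =>
      intro h
      obtain ⟨x, hx, y, hy, hxy⟩ := Language.mem_mul.1 h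
      have hx' : x = [a] := hx
      subst hx'
      rw [← hxy, ih hy]
      rfl

lemma rewrites_nonterminal_mem {N : Type} {r : ContextFreeRule T N}
    {u v : List (Symbol T N)} (h : r.Rewrites u v) : Symbol.nonterminal r.input ∈ u := by
  obtain ⟨p, q, rfl, -⟩ := h.exists_parts
  simp

lemma not_produces_terminals {g : ContextFreeGrammar.{0} T} {w : List T}
    {t : List (Symbol T g.NT)} (h : g.Produces (w.map .terminal) t) : False := by
  obtain ⟨r, -, hrw⟩ := h
  have hmem := rewrites_nonterminal_mem hrw
  simp only [List.mem_map] at hmem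
  obtain ⟨a, -, ha⟩ := hmem
  cases ha

lemma rewrites_singleton {N : Type} {r : ContextFreeRule T N} {A : N}
    {t : List (Symbol T N)} (h : r.Rewrites [Symbol.nonterminal A] t) :
    r.input = A ∧ t = r.output := by
  obtain ⟨p, q, hin, hout⟩ := h.exists_parts
  have hlen := congrArg List.length hin
  simp only [List.length_append, List.length_singleton] at hlen
  have hp : p = [] := List.eq_nil_of_length_eq_zero (by omega)
  have hq : q = [] := List.eq_nil_of_length_eq_zero (by omega)
  subst hp; subst hq
  simp only [List.nil_append, List.append_nil] at hin hout
  have : Symbol.nonterminal A = Symbol.nonterminal (T := T) r.input := by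
    injection hin
  exact ⟨(Symbol.nonterminal.inj this).symm, hout⟩

/-- Soundness of a compositional specification. -/
theorem derives_listLang {g : ContextFreeGrammar.{0} T} (σ : g.NT → Language T)
    (hr : ∀ r ∈ g.rules, ∀ w, w ∈ listLang σ r.output → w ∈ σ r.input)
    {s : List (Symbol T g.NT)} {w : List T}
    (h : g.Derives s (w.map .terminal)) : w ∈ listLang σ s := by
  induction h using Relation.ReflTransGen.head_induction_on with
  | refl => exact mem_listLang_terminals σ w
  | head hp _ ih =>
      obtain ⟨r, hrmem, hrw⟩ := hp
      obtain ⟨p, q, rfl, rfl⟩ := hrw.exists_parts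
      rw [listLang_append, listLang_append] at ih ⊢
      obtain ⟨w₁₂, hw₁₂, w₃, hw₃, rfl⟩ := Language.mem_mul.1 ih
      obtain ⟨w₁, hw₁, w₂, hw₂, rfl⟩ := Language.mem_mul.1 hw₁₂
      refine Language.mem_mul.2 ⟨w₁ ++ w₂, Language.mem_mul.2
        ⟨w₁, hw₁, w₂, ?_, rfl⟩, w₃, hw₃, rfl⟩
      rw [listLang_singleton]
      exact hr r hrmem w₂ hw₂

/-- Step-counted derivations. -/
inductive DerivesIn (g : ContextFreeGrammar T) :
    List (Symbol T g.NT) → List (Symbol T g.NT) → ℕ → Prop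
  | refl (s) : DerivesIn g s s 0
  | head {s t u n} : g.Produces s t → DerivesIn g t u n → DerivesIn g s u (n + 1)

lemma DerivesIn.derives {g : ContextFreeGrammar.{0} T} {s t : List (Symbol T g.NT)} {n : ℕ}
    (h : DerivesIn g s t n) : g.Derives s t := by
  induction h with
  | refl s => rfl
  | head hp _ ih => exact hp.trans_derives ih

lemma Derives.derivesIn {g : ContextFreeGrammar.{0} T} {s t : List (Symbol T g.NT)}
    (h : g.Derives s t) : ∃ n, DerivesIn g s t n := by
  induction h using Relation.ReflTransGen.head_induction_on with
  | refl => exact ⟨0, DerivesIn.refl t⟩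
  | head hp _ ih => obtain ⟨n, hn⟩ := ih; exact ⟨n + 1, DerivesIn.head hp hn⟩

lemma derivesIn_zero {g : ContextFreeGrammar.{0} T} {s t : List (Symbol T g.NT)}
    (h : DerivesIn g s t 0) : s = t := by
  cases h; rfl

lemma derivesIn_succ {g : ContextFreeGrammar.{0} T} {s t : List (Symbol T g.NT)} {n : ℕ}
    (h : DerivesIn g s t (n + 1)) : ∃ u, g.Produces s u ∧ DerivesIn g u t n := by
  cases h with
  | head hp hd => exact ⟨_, hp, hd⟩

lemma derivesIn_terminals {g : ContextFreeGrammar.{0} T} {v : List T}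
    {s : List (Symbol T g.NT)} {n : ℕ}
    (h : DerivesIn g (v.map .terminal) s n) : s = v.map .terminal := by
  cases h with
  | refl => rfl
  | head hp _ => exact absurd hp not_produces_terminals

lemma terminals_inj {N : Type} {v w : List T}
    (h : v.map (Symbol.terminal (N := N)) = w.map .terminal) : v = w :=
  List.map_injective_iff.2 (fun _ _ hab => Symbol.terminal.inj hab) h

/-- Splitting a derivation of a terminal word across a concatenation. -/
lemma derivesIn_append_split {g : ContextFreeGrammar.{0} T} :
    ∀ {n : ℕ} {s₁ s₂ : List (Symbol T g.NT)} {w : List T},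
    DerivesIn g (s₁ ++ s₂) (w.map .terminal) n →
    ∃ w₁ w₂ n₁ n₂, w = w₁ ++ w₂ ∧ n₁ + n₂ = n ∧
      DerivesIn g s₁ (w₁.map .terminal) n₁ ∧ DerivesIn g s₂ (w₂.map .terminal) n₂ := by
  intro n
  induction n using Nat.strong_induction_on with
  | _ n ih =>
    intro s₁ s₂ w h
    cases n with
    | zero =>
        have he : s₁ ++ s₂ = w.map .terminal := derivesIn_zero h
        obtain ⟨l₁, l₂, rfl, hl₁, hl₂⟩ := List.map_eq_append_iff.1 he.symm
        exact ⟨l₁, l₂, 0, 0, rfl, rfl, hl₁ ▸ DerivesIn.refl _, hl₂ ▸ DerivesIn.refl _⟩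
    | succ n' =>
        obtain ⟨u, hp, hrest⟩ := derivesIn_succ h
        obtain ⟨r, hrmem, hrw⟩ := hp
        obtain ⟨p, q, hpq, rfl⟩ := hrw.exists_parts
        rw [List.append_assoc] at hpq
        rcases List.append_eq_append_iff.1 hpq with ⟨a', hp', hs₂⟩ | ⟨c', hs₁, hq⟩
        · -- the rewritten nonterminal is inside s₂
          have hu : p ++ r.output ++ q = s₁ ++ (a' ++ r.output ++ q) := by
            rw [hp']; simp
          rw [hu] at hrest
          obtain ⟨w₁, w₂, n₁, n₂, rfl, hn, hd₁, hd₂⟩ := ih n' (by omega) hrest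
          refine ⟨w₁, w₂, n₁, n₂ + 1, rfl, by omega, hd₁, ?_⟩
          refine DerivesIn.head ⟨r, hrmem, ?_⟩ hd₂
          rw [hs₂, ← List.append_assoc]
          exact ContextFreeRule.rewrites_of_exists_parts r a' q
        · cases c' with
          | nil =>
              simp only [List.append_nil] at hs₁
              simp only [List.nil_append] at hq
              have hu : p ++ r.output ++ q = s₁ ++ (r.output ++ q) := by
                rw [hs₁]; simp
              rw [hu] at hrest
              obtain ⟨w₁, w₂, n₁, n₂, rfl, hn, hd₁, hd₂⟩ := ih n' (by omega) hrest
              refine ⟨w₁, w₂, n₁, n₂ + 1, rfl, by omega, hd₁, ?_⟩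
              refine DerivesIn.head ⟨r, hrmem, ?_⟩ hd₂
              rw [← hq]
              exact ContextFreeRule.Rewrites.head q
          | cons c₀ c'' =>
              rw [List.cons_append] at hq
              have hq' : Symbol.nonterminal r.input :: q = c₀ :: (c'' ++ s₂) := hq
              injection hq' with h1 h2
              subst h1
              subst h2
              have hu : p ++ r.output ++ (c'' ++ s₂) = (p ++ r.output ++ c'') ++ s₂ := by
                simp
              rw [hu] at hrest
              obtain ⟨w₁, w₂, n₁, n₂, rfl, hn, hd₁, hd₂⟩ := ih n' (by omega) hrest
              refine ⟨w₁, w₂, n₁ + 1, n₂, rfl, by omega, ?_, hd₂⟩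
              refine DerivesIn.head ⟨r, hrmem, ?_⟩ hd₁
              rw [hs₁, show p ++ (Symbol.nonterminal r.input :: c'') =
                p ++ [Symbol.nonterminal r.input] ++ c'' by simp]
              exact ContextFreeRule.rewrites_of_exists_parts r p c''

end CFG

/-! ### Part 6: the grammar construction -/

section Construction
variable {V : Type} [Fintype V] (bar : V → V) (m k : ℕ) (gr : ContextFreeGrammar.{0} V)

def BigNT : Type := (gr.NT × Prof V × Prof V) ⊕ (Prof V ⊕ Unit)

noncomputable def profS : Finset (Prof V) :=
  (range_prof_finite (m := m) (k := k) (V := V)).toFinset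

lemma prof_mem_profS (u : List V) : prof m k u ∈ profS m k :=
  (Set.Finite.mem_toFinset _).2 ⟨u, rfl⟩

lemma mem_profS_iff {P : Prof V} : P ∈ profS m k ↔ ∃ u : List V, prof m k u = P :=
  Set.Finite.mem_toFinset _

variable {m k}

lemma updW_mem_profS (hk : 1 ≤ k) {P : Prof V} (hP : P ∈ profS m k) (w : List V) :
    updW m k P w ∈ profS m k := by
  obtain ⟨u, rfl⟩ := (mem_profS_iff m k).1 hP
  rw [← prof_appendW hk]
  exact prof_mem_profS m k _

lemma updWL_mem_profS (hk : 1 ≤ k) {P : Prof V} (hP : P ∈ profS m k) (w : List V) :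
    updWL m k w P ∈ profS m k := by
  obtain ⟨u, rfl⟩ := (mem_profS_iff m k).1 hP
  rw [← prof_prependW hk]
  exact prof_mem_profS m k _

variable (m k)

noncomputable def blocksF : Finset (List V) := (List.finite_length_le V m).toFinset

lemma mem_blocksF {g : List V} : g ∈ blocksF (V := V) m ↔ g.length ≤ m :=
  Set.Finite.mem_toFinset _

/-- Annotation relation for the product construction. -/
inductive AnnRel : Prof V → List (Symbol V gr.NT) → List (Symbol V (BigNT gr)) → Prof V → Prop
  | nil (P) : AnnRel P [] [] P
  | term {P rest o Q} (a) : AnnRel (updR m k a P) rest o Q →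
      AnnRel P (.terminal a :: rest) (.terminal a :: o) Q
  | nt {P rest o Q} (A Q') : Q' ∈ profS m k → AnnRel Q' rest o Q →
      AnnRel P (.nonterminal A :: rest) (.nonterminal (Sum.inl (A, P, Q')) :: o) Q

noncomputable def ann : List (Symbol V gr.NT) → Prof V →
    Finset (List (Symbol V (BigNT gr)) × Prof V)
  | [], P => {([], P)}
  | .terminal a :: rest, P =>
      (ann rest (updR m k a P)).image (fun oq => (Symbol.terminal a :: oq.1, oq.2))
  | .nonterminal A :: rest, P =>
      (profS m k).biUnion (fun Q' => (ann rest Q').image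
        (fun oq => (Symbol.nonterminal (Sum.inl (A, P, Q')) :: oq.1, oq.2)))

lemma mem_ann_iff : ∀ (out : List (Symbol V gr.NT)) (P : Prof V)
    (o : List (Symbol V (BigNT gr))) (Q : Prof V),
    (o, Q) ∈ ann m k gr out P ↔ AnnRel m k gr P out o Q := by
  intro out
  induction out with
  | nil =>
      intro P o Q
      rw [ann]
      simp only [Finset.mem_singleton, Prod.mk.injEq]
      constructor
      · rintro ⟨rfl, rfl⟩
        exact AnnRel.nil _
      · rintro h
        cases h
        exact ⟨rfl, rfl⟩
  | cons s rest ih =>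
      intro P o Q
      cases s with
      | terminal a =>
          rw [ann]
          simp only [Finset.mem_image, Prod.mk.injEq, Prod.exists]
          constructor
          · rintro ⟨o', Q', h, rfl, rfl⟩
            exact AnnRel.term a ((ih _ _ _).1 h)
          · rintro h
            cases h with
            | term a h' => exact ⟨_, _, (ih _ _ _).2 h', rfl, rfl⟩
      | nonterminal A =>
          rw [ann]
          simp only [Finset.mem_biUnion, Finset.mem_image, Prod.mk.injEq, Prod.exists]
          constructor
          · rintro ⟨Q', hQ', o', Q'', h, heq, rfl⟩
            have h1 : o = Symbol.nonterminal (Sum.inl (A, P, Q')) :: o' := heq.symm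
            subst h1
            exact AnnRel.nt A Q' hQ' ((ih _ _ _).1 h)
          · rintro h
            cases h with
            | nt A Q' hQ' h' => exact ⟨Q', hQ', _, _, (ih _ _ _).2 h', rfl, rfl⟩

noncomputable def R1 : Finset (ContextFreeRule V (BigNT gr)) :=
  gr.rules.biUnion fun r => (profS m k).biUnion fun P =>
    (ann m k gr r.output P).image fun oq => ⟨Sum.inl (r.input, P, oq.2), oq.1⟩

noncomputable def R2 : Finset (ContextFreeRule V (BigNT gr)) :=
  (profS m k).image fun P => ⟨Sum.inr (Sum.inl P),
    [Symbol.nonterminal (Sum.inl (gr.initial, prof m k [], P))]⟩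

noncomputable def R3 : Finset (ContextFreeRule V (BigNT gr)) :=
  (((profS m k) ×ˢ (blocksF m)).filter (fun Qg => profRE bar m k Qg.1 Qg.2)).image fun Qg =>
    ⟨Sum.inr (Sum.inl (updW m k Qg.1 (rc bar Qg.2))),
      Symbol.nonterminal (Sum.inr (Sum.inl Qg.1)) :: (rc bar Qg.2).map Symbol.terminal⟩

noncomputable def R4 : Finset (ContextFreeRule V (BigNT gr)) :=
  (((profS m k) ×ˢ (blocksF m)).filter (fun Qg => profLE bar m k Qg.1 Qg.2)).image fun Qg =>
    ⟨Sum.inr (Sum.inl (updWL m k (rc bar Qg.2) Qg.1)),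
      (rc bar Qg.2).map Symbol.terminal ++ [Symbol.nonterminal (Sum.inr (Sum.inl Qg.1))]⟩

noncomputable def R5 : Finset (ContextFreeRule V (BigNT gr)) :=
  (profS m k).image fun Q => ⟨Sum.inr (Sum.inr ()), [Symbol.nonterminal (Sum.inr (Sum.inl Q))]⟩

noncomputable def bigG : ContextFreeGrammar V :=
  ⟨BigNT gr, Sum.inr (Sum.inr ()),
    R1 m k gr ∪ R2 m k gr ∪ R3 bar m k gr ∪ R4 bar m k gr ∪ R5 m k gr⟩

/-- The specification of the big grammar's nonterminals. -/
def bigσ (L : Set (List V)) : BigNT gr → Language V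
  | .inl (A, P, Q) =>
      {w | gr.Derives [.nonterminal A] (w.map .terminal) ∧ updW m k P w = Q}
  | .inr (.inl Q) =>
      {v | ∃ w x y : List V, v = x ++ w ++ y ∧ w ∈ L ∧ Reach bar m k (prof m k w) Q x y}
  | .inr (.inr _) => lang (HIstarL bar m k L)

end Construction

/-! ### Part 7: soundness of the big grammar -/

section Soundness
variable {V : Type} [Fintype V] {bar : V → V} {m k : ℕ} {gr : ContextFreeGrammar.{0} V}
  {L : Set (List V)}

lemma ann_sound {P out o Q} (hAnn : AnnRel m k gr P out o Q) :
    ∀ w, w ∈ listLang (bigσ bar m k gr L) o →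
      gr.Derives out (w.map .terminal) ∧ updW m k P w = Q := by
  induction hAnn with
  | nil P =>
      intro w hw
      have hw' : w = [] := (Language.mem_one w).1 hw
      subst hw'
      exact ⟨by rfl, rfl⟩
  | @term P rest o Q a h ih =>
      intro w hw
      obtain ⟨x, hx, y, hy, rfl⟩ := Language.mem_mul.1 hw
      have hx' : x = [a] := hx
      subst hx'
      obtain ⟨hder, hupd⟩ := ih y hy
      constructor
      · have h2 := hder.append_left [Symbol.terminal a]
        simpa using h2
      · exact hupd
  | @nt P rest o Q A Q' hQ' h ih =>
      intro w hw
      obtain ⟨x, hx, y, hy, rfl⟩ := Language.mem_mul.1 hw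
      obtain ⟨hderA, hupdA⟩ := hx
      obtain ⟨hder, hupd⟩ := ih y hy
      constructor
      · have h1 : gr.Derives ([Symbol.nonterminal A] ++ rest) (x.map .terminal ++ rest) :=
          hderA.append_right rest
        have h2 : gr.Derives (x.map .terminal ++ rest) (x.map .terminal ++ y.map .terminal) :=
          hder.append_left _
        have h3 := h1.trans h2
        simpa using h3
      · rw [updW_append, hupdA, hupd]

lemma bigG_sound (hbar : ∀ a, bar (bar a) = a) (hk : 1 ≤ k)
    (hgrL : gr.language = lang L) :
    ∀ r ∈ (bigG bar m k gr).rules, ∀ w,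
      w ∈ listLang (bigσ bar m k gr L) r.output → w ∈ bigσ bar m k gr L r.input := by
  intro r hr w hw
  have hr' : r ∈ R1 m k gr ∪ R2 m k gr ∪ R3 bar m k gr ∪ R4 bar m k gr ∪ R5 m k gr := hr
  rcases Finset.mem_union.1 hr' with h1234 | h5
  rotate_left
  · -- R5
    obtain ⟨Q, hQ, rfl⟩ := Finset.mem_image.1 h5
    rw [listLang_singleton] at hw
    obtain ⟨w₀, x, y, rfl, hwL, hreach⟩ := hw
    exact Set.mem_iUnion₂.2 ⟨w₀, hwL,
      (mem_HIstar_iff_reach hbar hk).2 ⟨x, y, Q, rfl, hreach⟩⟩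
  rcases Finset.mem_union.1 h1234 with h123 | h4
  rotate_left
  · -- R4
    obtain ⟨Qg, hQg, rfl⟩ := Finset.mem_image.1 h4
    obtain ⟨hmem, hle⟩ := Finset.mem_filter.1 hQg
    obtain ⟨hQ, hg⟩ := Finset.mem_product.1 hmem
    erw [listLang_append, listLang_singleton] at hw
    obtain ⟨v₁, hv₁, v₂, hv₂, rfl⟩ := Language.mem_mul.1 hw
    have hv₁' : v₁ = rc bar Qg.2 := listLang_terminals_eq _ hv₁
    subst hv₁'
    obtain ⟨w₀, x, y, rfl, hwL, hreach⟩ := hv₂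
    exact ⟨w₀, rc bar Qg.2 ++ x, y, by simp, hwL,
      Reach.left hreach ((mem_blocksF m).1 hg) hle⟩
  rcases Finset.mem_union.1 h123 with h12 | h3
  rotate_left
  · -- R3
    obtain ⟨Qg, hQg, rfl⟩ := Finset.mem_image.1 h3
    obtain ⟨hmem, hre⟩ := Finset.mem_filter.1 hQg
    obtain ⟨hQ, hg⟩ := Finset.mem_product.1 hmem
    have hw' : w ∈ symLang (bigσ bar m k gr L) (Symbol.nonterminal (Sum.inr (Sum.inl Qg.1))) *
        listLang (bigσ bar m k gr L) ((rc bar Qg.2).map Symbol.terminal) := hw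
    obtain ⟨v₁, hv₁, v₂, hv₂, rfl⟩ := Language.mem_mul.1 hw'
    have hv₂' : v₂ = rc bar Qg.2 := listLang_terminals_eq _ hv₂
    subst hv₂'
    obtain ⟨w₀, x, y, rfl, hwL, hreach⟩ := hv₁
    exact ⟨w₀, x, y ++ rc bar Qg.2, by simp, hwL,
      Reach.right hreach ((mem_blocksF m).1 hg) hre⟩
  rcases Finset.mem_union.1 h12 with h1 | h2
  · -- R1
    obtain ⟨r₀, hr₀, hmem⟩ := Finset.mem_biUnion.1 h1
    obtain ⟨P, hP, hmem2⟩ := Finset.mem_biUnion.1 hmem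
    obtain ⟨oq, hoq, rfl⟩ := Finset.mem_image.1 hmem2
    have hAnn : AnnRel m k gr P r₀.output oq.1 oq.2 :=
      (mem_ann_iff m k gr r₀.output P oq.1 oq.2).1 (by simpa using hoq)
    obtain ⟨hder, hupd⟩ := ann_sound hAnn w hw
    exact ⟨(ContextFreeGrammar.Produces.trans_derives ⟨r₀, hr₀,
      ContextFreeRule.Rewrites.input_output⟩ hder), hupd⟩
  · -- R2
    obtain ⟨P, hP, rfl⟩ := Finset.mem_image.1 h2
    rw [listLang_singleton] at hw
    obtain ⟨hder, hupd⟩ := hw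
    have hwL : w ∈ L := by
      have : w ∈ gr.language := hder
      rw [hgrL] at this
      exact this
    have hPw : prof m k w = P := by
      have h0 := prof_appendW (m := m) hk ([] : List V) w
      simpa using h0.trans hupd
    exact ⟨w, [], [], by simp, hwL, hPw ▸ Reach.refl⟩

lemma bigG_language_subset (hbar : ∀ a, bar (bar a) = a) (hk : 1 ≤ k)
    (hgrL : gr.language = lang L) :
    ∀ w, w ∈ (bigG bar m k gr).language → w ∈ lang (HIstarL bar m k L) := by
  intro w hw
  have h := derives_listLang (bigσ bar m k gr L) (bigG_sound hbar hk hgrL) hw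
  erw [listLang_singleton] at h
  exact h

end Soundness

/-! ### Part 8: completeness of the big grammar -/

section Completeness
variable {V : Type} [Fintype V] {bar : V → V} {m k : ℕ} {gr : ContextFreeGrammar.{0} V}
  {L : Set (List V)}

lemma reach_mem_profS (hk : 1 ≤ k) {P Q : Prof V} {x y : List V} (hP : P ∈ profS m k)
    (h : Reach bar m k P Q x y) : Q ∈ profS m k := by
  induction h with
  | refl => exact hP
  | right _ _ _ ih => exact updW_mem_profS hk ih _
  | left _ _ _ ih => exact updWL_mem_profS hk ih _

lemma comp_prod (hk : 1 ≤ k) :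
    ∀ n : ℕ, ∀ (A : gr.NT) (w : List V) (P : Prof V),
      DerivesIn gr [Symbol.nonterminal A] (w.map .terminal) n → P ∈ profS m k →
      (bigG bar m k gr).Derives
        [Symbol.nonterminal (Sum.inl (A, P, updW m k P w))] (w.map .terminal) := by
  intro n
  induction n using Nat.strong_induction_on with
  | _ n ih =>
    have comp_form : ∀ (out : List (Symbol V gr.NT)) (j : ℕ) (w : List V) (P : Prof V),
        j < n → DerivesIn gr out (w.map .terminal) j → P ∈ profS m k →
        ∃ o, AnnRel m k gr P out o (updW m k P w) ∧
          (bigG bar m k gr).Derives o (w.map .terminal) := by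
      intro out
      induction out with
      | nil =>
          intro j w P hj hd hP
          cases j with
          | zero =>
              have hw : ([] : List (Symbol V gr.NT)) = w.map .terminal := derivesIn_zero hd
              have hw' : w = [] := by
                cases w with
                | nil => rfl
                | cons a t => exact absurd hw (by simp)
              subst hw'
              exact ⟨[], AnnRel.nil P, by rfl⟩
          | succ j' =>
              obtain ⟨u, hp, -⟩ := derivesIn_succ hd
              obtain ⟨r, -, hrw⟩ := hp
              exact absurd (rewrites_nonterminal_mem hrw) List.not_mem_nil
      | cons s rest ihout =>
          intro j w P hj hd hP
          have hd' : DerivesIn gr ([s] ++ rest) (w.map .terminal) j := by simpa using hd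
          obtain ⟨w₁, w₂, n₁, n₂, rfl, hn, hd₁, hd₂⟩ := derivesIn_append_split hd'
          cases s with
          | terminal a =>
              have hmap : w₁.map (Symbol.terminal (N := gr.NT)) = [a].map .terminal :=
                derivesIn_terminals (v := [a]) (by simpa using hd₁)
              have hw₁ : w₁ = [a] := (terminals_inj hmap.symm).symm
              subst hw₁
              obtain ⟨o, hAnn, hDer⟩ :=
                ihout n₂ w₂ (updR m k a P) (by omega) hd₂ (updW_mem_profS hk hP [a])
              refine ⟨Symbol.terminal a :: o, ?_, ?_⟩
              · exact AnnRel.term a hAnn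
              · have h2 := hDer.append_left [Symbol.terminal a]
                exact h2
          | nonterminal A =>
              have hbig := ih n₁ (by omega) A w₁ P hd₁ hP
              obtain ⟨o, hAnn, hDer⟩ :=
                ihout n₂ w₂ (updW m k P w₁) (by omega) hd₂ (updW_mem_profS hk hP w₁)
              refine ⟨Symbol.nonterminal (Sum.inl (A, P, updW m k P w₁)) :: o, ?_, ?_⟩
              · rw [updW_append]
                exact AnnRel.nt A (updW m k P w₁) (updW_mem_profS hk hP w₁) hAnn
              · have h1 := hbig.append_right o
                have h2 := hDer.append_left (w₁.map (Symbol.terminal (N := BigNT gr)))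
                have h3 := h1.trans h2
                rw [List.map_append]; exact h3
    intro A w P hd hP
    cases n with
    | zero =>
        have h0 : [Symbol.nonterminal A] = w.map .terminal := derivesIn_zero hd
        have : Symbol.nonterminal A ∈ w.map (Symbol.terminal (N := gr.NT)) := by
          rw [← h0]; simp
        simp only [List.mem_map] at this
        obtain ⟨a, -, ha⟩ := this
        cases ha
    | succ n' =>
        obtain ⟨u, hp, hrest⟩ := derivesIn_succ hd
        obtain ⟨r, hrmem, hrw⟩ := hp
        obtain ⟨hin, rfl⟩ := rewrites_singleton hrw
        obtain ⟨o, hAnn, hDer⟩ := comp_form r.output n' w P (by omega) hrest hP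
        have hrule : (⟨Sum.inl (r.input, P, updW m k P w), o⟩ :
            ContextFreeRule V (BigNT gr)) ∈ (bigG bar m k gr).rules := by
          refine Finset.mem_union_left _ (Finset.mem_union_left _ (Finset.mem_union_left _
            (Finset.mem_union_left _ ?_)))
          refine Finset.mem_biUnion.2 ⟨r, hrmem, Finset.mem_biUnion.2 ⟨P, hP, ?_⟩⟩
          exact Finset.mem_image.2 ⟨(o, updW m k P w),
            (mem_ann_iff m k gr r.output P o _).2 hAnn, rfl⟩
        rw [← hin]
        exact ContextFreeGrammar.Produces.trans_derives
          ⟨_, hrule, ContextFreeRule.Rewrites.input_output⟩ hDer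

lemma comp_wrap (hk : 1 ≤ k) {P Q : Prof V} {x y : List V} (hP : P ∈ profS m k)
    (h : Reach bar m k P Q x y) :
    (bigG bar m k gr).Derives [Symbol.nonterminal (Sum.inr (Sum.inl Q))]
      (x.map .terminal ++ [Symbol.nonterminal (Sum.inr (Sum.inl P))] ++ y.map .terminal) := by
  induction h with
  | refl =>
      simp only [List.map_nil, List.nil_append, List.append_nil]
      exact ContextFreeGrammar.Derives.refl _
  | @right Q' x' y' g hr hg hre ihd =>
      have hQ' : Q' ∈ profS m k := reach_mem_profS hk hP hr
      have hrule : (⟨Sum.inr (Sum.inl (updW m k Q' (rc bar g))),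
          Symbol.nonterminal (Sum.inr (Sum.inl Q')) :: (rc bar g).map Symbol.terminal⟩ :
          ContextFreeRule V (BigNT gr)) ∈ (bigG bar m k gr).rules := by
        refine Finset.mem_union_left _ (Finset.mem_union_left _ (Finset.mem_union_right _ ?_))
        exact Finset.mem_image.2 ⟨(Q', g), Finset.mem_filter.2
          ⟨Finset.mem_product.2 ⟨hQ', (mem_blocksF m).2 hg⟩, hre⟩, rfl⟩
      have hstep : (bigG bar m k gr).Produces
          [Symbol.nonterminal (Sum.inr (Sum.inl (updW m k Q' (rc bar g))))]
          (Symbol.nonterminal (Sum.inr (Sum.inl Q')) :: (rc bar g).map Symbol.terminal) :=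
        ⟨_, hrule, ContextFreeRule.Rewrites.input_output⟩
      have h2 := ihd.append_right ((rc bar g).map (Symbol.terminal (N := (bigG bar m k gr).NT)))
      have h3 := hstep.trans_derives (by simpa using h2)
      have e : (x'.map (Symbol.terminal (N := (bigG bar m k gr).NT)) ++
          ([Symbol.nonterminal (Sum.inr (Sum.inl P))] : List (Symbol V (bigG bar m k gr).NT)) ++
          y'.map Symbol.terminal ++
          (rc bar g).map Symbol.terminal) = x'.map Symbol.terminal ++
          ([Symbol.nonterminal (Sum.inr (Sum.inl P))] : List (Symbol V (bigG bar m k gr).NT)) ++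
          (y' ++ rc bar g).map Symbol.terminal := by
        simp
      exact (congrArg ((bigG bar m k gr).Derives _) e).mp h3
  | @left Q' x' y' g hr hg hle ihd =>
      have hQ' : Q' ∈ profS m k := reach_mem_profS hk hP hr
      have hrule : (⟨Sum.inr (Sum.inl (updWL m k (rc bar g) Q')),
          (rc bar g).map Symbol.terminal ++ [Symbol.nonterminal (Sum.inr (Sum.inl Q'))]⟩ :
          ContextFreeRule V (BigNT gr)) ∈ (bigG bar m k gr).rules := by
        refine Finset.mem_union_left _ (Finset.mem_union_right _ ?_)
        exact Finset.mem_image.2 ⟨(Q', g), Finset.mem_filter.2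
          ⟨Finset.mem_product.2 ⟨hQ', (mem_blocksF m).2 hg⟩, hle⟩, rfl⟩
      have hstep : (bigG bar m k gr).Produces
          [Symbol.nonterminal (Sum.inr (Sum.inl (updWL m k (rc bar g) Q')))]
          ((rc bar g).map Symbol.terminal ++ [Symbol.nonterminal (Sum.inr (Sum.inl Q'))]) :=
        ⟨_, hrule, ContextFreeRule.Rewrites.input_output⟩
      have h2 := ihd.append_left ((rc bar g).map (Symbol.terminal (N := (bigG bar m k gr).NT)))
      have h3 := hstep.trans_derives (by exact h2)
      have e : (rc bar g).map (Symbol.terminal (N := (bigG bar m k gr).NT)) ++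
          (x'.map Symbol.terminal ++
          ([Symbol.nonterminal (Sum.inr (Sum.inl P))] : List (Symbol V (bigG bar m k gr).NT)) ++
          y'.map Symbol.terminal) = (rc bar g ++ x').map Symbol.terminal ++
          ([Symbol.nonterminal (Sum.inr (Sum.inl P))] : List (Symbol V (bigG bar m k gr).NT)) ++
          y'.map Symbol.terminal := by
        simp
      exact (congrArg ((bigG bar m k gr).Derives _) e).mp h3

lemma bigG_language_eq (hbar : ∀ a, bar (bar a) = a) (hk : 1 ≤ k)
    (hgrL : gr.language = lang L) :
    (bigG bar m k gr).language = lang (HIstarL bar m k L) := by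
  apply Set.Subset.antisymm
  · intro w hw
    exact bigG_language_subset hbar hk hgrL w hw
  · intro v hv
    obtain ⟨w, hwL, hstar⟩ := Set.mem_iUnion₂.1 hv
    obtain ⟨x, y, Q, rfl, hreach⟩ := (mem_HIstar_iff_reach hbar hk).1 hstar
    have hP : prof m k w ∈ profS m k := prof_mem_profS m k w
    have hQ : Q ∈ profS m k := reach_mem_profS hk hP hreach
    -- start rule
    have hrule5 : (⟨Sum.inr (Sum.inr ()),
        [Symbol.nonterminal (Sum.inr (Sum.inl Q))]⟩ :
        ContextFreeRule V (BigNT gr)) ∈ (bigG bar m k gr).rules :=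
      Finset.mem_union_right _ (Finset.mem_image.2 ⟨Q, hQ, rfl⟩)
    have d1 : (bigG bar m k gr).Produces
        [Symbol.nonterminal (Sum.inr (Sum.inr ()))]
        [Symbol.nonterminal (Sum.inr (Sum.inl Q))] :=
      ⟨_, hrule5, ContextFreeRule.Rewrites.input_output⟩
    have d2 := comp_wrap (gr := gr) hk hP hreach
    -- base rule
    have hrule2 : (⟨Sum.inr (Sum.inl (prof m k w)),
        [Symbol.nonterminal (Sum.inl (gr.initial, prof m k [], prof m k w))]⟩ :
        ContextFreeRule V (BigNT gr)) ∈ (bigG bar m k gr).rules := by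
      refine Finset.mem_union_left _ (Finset.mem_union_left _ (Finset.mem_union_left _
        (Finset.mem_union_right _ ?_)))
      exact Finset.mem_image.2 ⟨prof m k w, hP, rfl⟩
    have d3 : (bigG bar m k gr).Produces
        (x.map .terminal ++ [Symbol.nonterminal (Sum.inr (Sum.inl (prof m k w)))]
          ++ y.map .terminal)
        (x.map .terminal ++ [Symbol.nonterminal (Sum.inl (gr.initial, prof m k [], prof m k w))]
          ++ y.map .terminal) :=
      ⟨_, hrule2, ContextFreeRule.rewrites_of_exists_parts _ (x.map .terminal) (y.map .terminal)⟩
    -- the core derivation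
    have hwgr : w ∈ gr.language := by rw [hgrL]; exact hwL
    obtain ⟨n, hn⟩ := Derives.derivesIn hwgr
    have hupd : updW m k (prof m k []) w = prof m k w := by
      have h0 := prof_appendW (m := m) hk ([] : List V) w
      simpa using h0.symm
    have d4 := comp_prod (bar := bar) hk n gr.initial w (prof m k []) hn (prof_mem_profS m k [])
    rw [hupd] at d4
    have d5 := (d4.append_right (y.map (Symbol.terminal (N := (bigG bar m k gr).NT)))).append_left
      (x.map .terminal)
    -- assemble
    have dAll := ((d1.trans_derives d2).trans_produces d3).trans ((congrArg (fun l => (bigG bar m k gr).Derives l _) (List.append_assoc _ _ _).symm).mp d5)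
    show (bigG bar m k gr).Derives _ _
    have : (x ++ w ++ y).map (Symbol.terminal (N := (bigG bar m k gr).NT)) =
        x.map .terminal ++ (w.map .terminal ++ y.map .terminal) := by simp
    rw [this]
    exact dAll

end Completeness

variable {V : Type} [Fintype V]

theorem contextFree_closed_HIstarL (bar : V → V) (hbar : ∀ a, bar (bar a) = a) (m k : ℕ) (hm : 1 ≤ m) (hk : 1 ≤ k)
    (L : Set (List V)) (hL : Language.IsContextFree (lang L)) :
    Language.IsContextFree (lang (HIstarL bar m k L)) := by
  obtain ⟨gr, hgr⟩ := hL
  exact ⟨bigG bar m k gr, bigG_language_eq hbar hk hgr⟩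

end Hairpin
end

section
/- For any m, k ≥ 1 and any regular language L ⊆ V*, the language HI_{m,k}(L) (non-iterated m-bounded k-hairpin incompletion applied to L) is regular. -/
set_option linter.unusedSectionVars false
set_option linter.unusedVariables false


open scoped Classical

namespace Hairpin

variable {V : Type}

variable {V : Type} [Fintype V]


lemma isRegular_empty : Language.IsRegular (lang (∅ : Set (List V))) :=
  ⟨Unit, inferInstance, ⟨fun _ _ => (), (), ∅⟩, by
    ext x; simp [DFA.mem_accepts]; exact fun h => h.elim⟩

lemma isRegular_univ : Language.IsRegular (lang (Set.univ : Set (List V))) :=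
  ⟨Unit, inferInstance, ⟨fun _ _ => (), (), Set.univ⟩, by
    ext x; simp [DFA.mem_accepts]; trivial⟩

private lemma prod_evalFrom {σ τ : Type} (M : DFA V σ) (N : DFA V τ) (acc : Set (σ × τ))
    (s : σ) (t : τ) (x : List V) :
    (DFA.mk (fun p a => (M.step p.1 a, N.step p.2 a)) (M.start, N.start) acc).evalFrom (s, t) x
      = (M.evalFrom s x, N.evalFrom t x) := by
  induction x generalizing s t with
  | nil => rfl
  | cons a x ih => simp [DFA.evalFrom, List.foldl_cons] at *; exact ih _ _

lemma isRegular_inter {A B : Set (List V)} (hA : Language.IsRegular (lang A))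
    (hB : Language.IsRegular (lang B)) : Language.IsRegular (lang (A ∩ B)) := by
  obtain ⟨σ, _, M, hM⟩ := hA
  obtain ⟨τ, _, N, hN⟩ := hB
  refine ⟨σ × τ, inferInstance, ⟨fun p a => (M.step p.1 a, N.step p.2 a), (M.start, N.start),
    {p | p.1 ∈ M.accept ∧ p.2 ∈ N.accept}⟩, ?_⟩
  ext x
  have h := prod_evalFrom M N {p | p.1 ∈ M.accept ∧ p.2 ∈ N.accept} M.start N.start x
  have hx : x ∈ lang (A ∩ B) ↔ x ∈ lang A ∧ x ∈ lang B := Iff.rfl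
  rw [← hM, ← hN] at hx
  simpa [DFA.mem_accepts, DFA.eval, h] using hx.symm

lemma isRegular_union {A B : Set (List V)} (hA : Language.IsRegular (lang A))
    (hB : Language.IsRegular (lang B)) : Language.IsRegular (lang (A ∪ B)) := by
  obtain ⟨σ, _, M, hM⟩ := hA
  obtain ⟨τ, _, N, hN⟩ := hB
  refine ⟨σ × τ, inferInstance, ⟨fun p a => (M.step p.1 a, N.step p.2 a), (M.start, N.start),
    {p | p.1 ∈ M.accept ∨ p.2 ∈ N.accept}⟩, ?_⟩
  ext x
  have h := prod_evalFrom M N {p | p.1 ∈ M.accept ∨ p.2 ∈ N.accept} M.start N.start x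
  have hx : x ∈ lang (A ∪ B) ↔ x ∈ lang A ∨ x ∈ lang B := Iff.rfl
  rw [← hM, ← hN] at hx
  simpa [DFA.mem_accepts, DFA.eval, h] using hx.symm

lemma isRegular_compl {A : Set (List V)} (hA : Language.IsRegular (lang A)) :
    Language.IsRegular (lang Aᶜ) := by
  obtain ⟨σ, _, M, hM⟩ := hA
  refine ⟨σ, inferInstance, ⟨M.step, M.start, M.acceptᶜ⟩, ?_⟩
  ext x
  have hx : x ∈ lang A ↔ x ∈ M.accepts := by rw [hM]
  simp only [DFA.mem_accepts, DFA.eval] at hx ⊢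
  show _ ↔ x ∈ Aᶜ
  simp only [Set.mem_compl_iff]
  exact not_congr (by exact hx.symm)


lemma mem_accepts_iff {σ : Type} (M : DFA V σ) {A : Set (List V)} (hM : M.accepts = lang A)
    (p : List V) : p ∈ A ↔ M.evalFrom M.start p ∈ M.accept := by
  have h1 : (p ∈ M.accepts) ↔ M.evalFrom M.start p ∈ M.accept := Iff.rfl
  rw [← h1, hM]; exact Iff.rfl

-- reversal
lemma isRegular_rev {A : Set (List V)} (hA : Language.IsRegular (lang A)) :
    Language.IsRegular (lang {x | x.reverse ∈ A}) := by
  obtain ⟨σ, _, M, hM⟩ := hA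
  set N : NFA V σ := ⟨fun t a => {s | M.step s a = t}, M.accept, {M.start}⟩ with hN
  have key : ∀ (x : List V) (S : Set σ),
      N.evalFrom S x = {t | M.evalFrom t x.reverse ∈ S} := by
    intro x
    induction x with
    | nil => intro S; ext t; simp [NFA.evalFrom]
    | cons a x ih =>
      intro S
      have h1 : N.evalFrom S (a :: x) = N.evalFrom (N.stepSet S a) x := rfl
      rw [h1, ih]
      ext t
      simp only [Set.mem_setOf_eq, NFA.stepSet, Set.mem_iUnion, List.reverse_cons,
        DFA.evalFrom_of_append, DFA.evalFrom_singleton]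
      constructor
      · rintro ⟨s, hs, h⟩
        have h' : M.step (M.evalFrom t x.reverse) a = s := h
        exact h' ▸ hs
      · intro h
        exact ⟨M.step (M.evalFrom t x.reverse) a, h, rfl⟩
  refine ⟨Set σ, inferInstance, N.toDFA, ?_⟩
  rw [NFA.toDFA_correct]
  ext x
  rw [NFA.mem_accepts]
  have hkey : N.evalFrom N.start x = {t | M.evalFrom t x.reverse ∈ M.accept} := key x M.accept
  rw [hkey]
  constructor
  · rintro ⟨S, hS, h2⟩
    have hS' : S = M.start := hS
    subst hS'
    exact (mem_accepts_iff M hM x.reverse).mpr h2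
  · intro hx
    exact ⟨M.start, rfl, (mem_accepts_iff M hM x.reverse).mp hx⟩

-- prefix closure : words with a prefix in A  (= A · Σ*)
lemma isRegular_prefClosure {A : Set (List V)} (hA : Language.IsRegular (lang A)) :
    Language.IsRegular (lang {x | ∃ p, p <+: x ∧ p ∈ A}) := by
  obtain ⟨σ, _, M, hM⟩ := hA
  set P : DFA V (σ × Bool) :=
    ⟨fun p a => (M.step p.1 a, p.2 || decide (p.1 ∈ M.accept)), (M.start, false),
     {p | p.2 = true ∨ p.1 ∈ M.accept}⟩ with hP
  have key : ∀ (x : List V) (s : σ) (b : Bool),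
      (P.evalFrom (s, b) x ∈ P.accept ↔ (b = true ∨ ∃ p, p <+: x ∧ M.evalFrom s p ∈ M.accept)) := by
    intro x
    induction x with
    | nil =>
      intro s b
      simp [hP, DFA.evalFrom]
    | cons a x ih =>
      intro s b
      have h1 : P.evalFrom (s, b) (a :: x)
          = P.evalFrom (M.step s a, b || decide (s ∈ M.accept)) x := rfl
      rw [h1, ih]
      constructor
      · rintro (hb | ⟨p, hp, hacc⟩)
        · rcases Bool.or_eq_true_iff.mp hb with hb | hs
          · exact Or.inl hb
          · exact Or.inr ⟨[], ⟨a :: x, rfl⟩, by simpa using of_decide_eq_true hs⟩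
        · exact Or.inr ⟨a :: p, List.cons_prefix_cons.mpr ⟨rfl, hp⟩, hacc⟩
      · rintro (hb | ⟨p, hp, hacc⟩)
        · exact Or.inl (by simp [hb])
        · cases p with
          | nil =>
            refine Or.inl ?_
            simp only [Bool.or_eq_true, decide_eq_true_eq]
            exact Or.inr hacc
          | cons c q =>
            obtain ⟨hc, hq⟩ := List.cons_prefix_cons.mp hp
            subst hc
            exact Or.inr ⟨q, hq, hacc⟩
  refine ⟨σ × Bool, inferInstance, P, ?_⟩
  ext x
  rw [DFA.mem_accepts]
  have hkey := key x M.start false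
  have hx : x ∈ lang {x | ∃ p, p <+: x ∧ p ∈ A} ↔ ∃ p, p <+: x ∧ p ∈ A := Iff.rfl
  rw [hx]
  constructor
  · intro h
    rcases hkey.mp h with hb | ⟨p, hp, hacc⟩
    · exact absurd hb (by simp)
    · exact ⟨p, hp, (mem_accepts_iff M hM p).mpr hacc⟩
  · rintro ⟨p, hp, hpA⟩
    exact hkey.mpr (Or.inr ⟨p, hp, (mem_accepts_iff M hM p).mp hpA⟩)

-- prepend a single letter
lemma isRegular_prependLetter (a : V) {A : Set (List V)} (hA : Language.IsRegular (lang A)) :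
    Language.IsRegular (lang {x | ∃ y ∈ A, x = a :: y}) := by
  obtain ⟨σ, _, M, hM⟩ := hA
  set P : DFA V (σ ⊕ Bool) :=
    ⟨fun s b => match s with
      | Sum.inl s => Sum.inl (M.step s b)
      | Sum.inr true => if b = a then Sum.inl M.start else Sum.inr false
      | Sum.inr false => Sum.inr false,
     Sum.inr true, Sum.inl '' M.accept⟩ with hP
  have keyl : ∀ (x : List V) (s : σ), P.evalFrom (Sum.inl s) x = Sum.inl (M.evalFrom s x) := by
    intro x
    induction x with
    | nil => intro s; rfl
    | cons b x ih => intro s; exact ih (M.step s b)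
  have keyd : ∀ (x : List V), P.evalFrom (Sum.inr false) x = Sum.inr false := by
    intro x
    induction x with
    | nil => rfl
    | cons b x ih => exact ih
  refine ⟨σ ⊕ Bool, inferInstance, P, ?_⟩
  ext x
  rw [DFA.mem_accepts]
  have hx : x ∈ lang {x | ∃ y ∈ A, x = a :: y} ↔ ∃ y ∈ A, x = a :: y := Iff.rfl
  rw [hx]
  match x with
  | [] =>
    constructor
    · rintro ⟨s, -, h⟩
      exact absurd h (by simp)
    · rintro ⟨y, -, h⟩
      exact absurd h (by simp)
  | b :: x =>
    have h1 : P.eval (b :: x) = P.evalFrom (P.step (Sum.inr true) b) x := rfl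
    rw [h1]
    by_cases hb : b = a
    · subst hb
      have h2 : P.step (Sum.inr true) b = Sum.inl M.start := by simp [hP]
      rw [h2, keyl]
      constructor
      · rintro ⟨s, hs, h⟩
        exact ⟨x, (mem_accepts_iff M hM x).mpr ((Sum.inl.inj h) ▸ hs), rfl⟩
      · rintro ⟨y, hy, h⟩
        injection h with h1 h2
        subst h2
        exact ⟨M.evalFrom M.start x, (mem_accepts_iff M hM x).mp hy, rfl⟩
    · have h2 : P.step (Sum.inr true) b = Sum.inr false := by simp [hP, hb]
      rw [h2, keyd]
      constructor
      · rintro ⟨s, -, h⟩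
        exact absurd h (by simp)
      · rintro ⟨y, -, h⟩
        injection h with h1 h2
        exact absurd h1 hb

-- prepend a fixed word
lemma isRegular_prep (u : List V) {A : Set (List V)} (hA : Language.IsRegular (lang A)) :
    Language.IsRegular (lang {x | ∃ y ∈ A, x = u ++ y}) := by
  induction u with
  | nil =>
    have h : {x | ∃ y ∈ A, x = [] ++ y} = A := by ext x; simp
    rw [h]; exact hA
  | cons a u ih =>
    have h : {x | ∃ y ∈ A, x = (a :: u) ++ y}
        = {x | ∃ z ∈ {x | ∃ y ∈ A, x = u ++ y}, x = a :: z} := by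
      ext x
      constructor
      · rintro ⟨y, hy, rfl⟩; exact ⟨u ++ y, ⟨y, hy, rfl⟩, rfl⟩
      · rintro ⟨z, ⟨y, hy, rfl⟩, rfl⟩; exact ⟨y, hy, rfl⟩
    rw [h]
    exact isRegular_prependLetter a ih

-- append a fixed word
lemma isRegular_app (u : List V) {A : Set (List V)} (hA : Language.IsRegular (lang A)) :
    Language.IsRegular (lang {x | ∃ y ∈ A, x = y ++ u}) := by
  have h : {x | ∃ y ∈ A, x = y ++ u}
      = {x | x.reverse ∈ {z | ∃ y ∈ {w : List V | w.reverse ∈ A}, z = u.reverse ++ y}} := by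
    ext x
    constructor
    · rintro ⟨y, hy, rfl⟩
      exact ⟨y.reverse, by simpa using hy, by simp⟩
    · rintro ⟨y, hy, hx⟩
      refine ⟨y.reverse, hy, ?_⟩
      have h2 := congrArg List.reverse hx
      simpa using h2
  rw [h]
  exact isRegular_rev (isRegular_prep u.reverse (isRegular_rev hA))

-- suffix closure : Sigma* . A
lemma isRegular_sufClosure {A : Set (List V)} (hA : Language.IsRegular (lang A)) :
    Language.IsRegular (lang {x | ∃ s, s <:+ x ∧ s ∈ A}) := by
  have h : {x | ∃ s, s <:+ x ∧ s ∈ A}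
      = {x | x.reverse ∈ {z | ∃ p, p <+: z ∧ p ∈ {w : List V | w.reverse ∈ A}}} := by
    ext x
    constructor
    · rintro ⟨s, hs, hsA⟩
      refine ⟨s.reverse, ?_, by simpa using hsA⟩
      exact List.reverse_prefix.mpr hs
    · rintro ⟨p, hp, hpA⟩
      refine ⟨p.reverse, ?_, hpA⟩
      have h2 : p.reverse.reverse <+: x.reverse := by simpa using hp
      exact List.reverse_prefix.mp (by simpa using h2)
  rw [h]
  exact isRegular_rev (isRegular_prefClosure (isRegular_rev hA))
lemma isRegular_patR (u v : List V) :
    Language.IsRegular (lang {w : List V | ∃ δ β, w = δ ++ u ++ β ++ v}) := by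
  have h3 := isRegular_app v (isRegular_sufClosure
    (isRegular_prep u (isRegular_univ (V := V))))
  have heq : {w : List V | ∃ δ β, w = δ ++ u ++ β ++ v}
      = {x | ∃ y ∈ {x : List V | ∃ s, s <:+ x ∧
          s ∈ {x : List V | ∃ z ∈ (Set.univ : Set (List V)), x = u ++ z}}, x = y ++ v} := by
    ext w
    constructor
    · rintro ⟨δ, β, rfl⟩
      exact ⟨δ ++ u ++ β, ⟨u ++ β, ⟨δ, by simp⟩, ⟨β, Set.mem_univ β, rfl⟩⟩,
        by simp [List.append_assoc]⟩
    · rintro ⟨y, ⟨s, ⟨δ, hy⟩, ⟨β, -, rfl⟩⟩, rfl⟩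
      exact ⟨δ, β, by rw [← hy]; simp [List.append_assoc]⟩
  rw [heq]; exact h3

lemma isRegular_patL (u v : List V) :
    Language.IsRegular (lang {w : List V | ∃ β δ, w = u ++ β ++ v ++ δ}) := by
  have h3 := isRegular_prep u (isRegular_sufClosure
    (isRegular_prep v (isRegular_univ (V := V))))
  have heq : {w : List V | ∃ β δ, w = u ++ β ++ v ++ δ}
      = {x | ∃ y ∈ {x : List V | ∃ s, s <:+ x ∧
          s ∈ {x : List V | ∃ z ∈ (Set.univ : Set (List V)), x = v ++ z}}, x = u ++ y} := by
    ext w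
    constructor
    · rintro ⟨β, δ, rfl⟩
      exact ⟨β ++ v ++ δ, ⟨v ++ δ, ⟨β, by simp⟩, ⟨δ, Set.mem_univ δ, rfl⟩⟩, by simp [List.append_assoc]⟩
    · rintro ⟨y, ⟨s, ⟨β, hy⟩, ⟨δ, -, rfl⟩⟩, rfl⟩
      exact ⟨β, δ, by rw [← hy]; simp [List.append_assoc]⟩
  rw [heq]; exact h3

lemma isRegular_biUnion {ι : Type} {s : Set ι} (hs : s.Finite) (f : ι → Set (List V))
    (hf : ∀ i, Language.IsRegular (lang (f i))) :
    Language.IsRegular (lang (⋃ i ∈ s, f i)) := by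
  refine Set.Finite.induction_on (motive := fun s _ => Language.IsRegular (lang (⋃ i ∈ s, f i))) s hs
    ?_ ?_
  · simp only [Set.mem_empty_iff_false, Set.iUnion_of_empty, Set.iUnion_false, Set.iUnion_empty]
    exact isRegular_empty
  · intro a s _ _ ih
    rw [Set.biUnion_insert]
    exact isRegular_union (hf _) ih

theorem regular_closed_HIL (bar : V → V) (hbar : ∀ a, bar (bar a) = a) (m k : ℕ) (hm : 1 ≤ m) (hk : 1 ≤ k)
    (L : Set (List V)) (hL : Language.IsRegular (lang L)) :
    Language.IsRegular (lang (HIL bar m k L)) := by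
  classical
  set S : Set (List V × List V) := {p | p.1.length ≤ m ∧ p.2.length = k} with hS
  have hSfin : S.Finite := by
    have h1 : S ⊆ {l : List V | l.length ≤ m} ×ˢ {l : List V | l.length = k} := by
      rintro ⟨γ, α⟩ ⟨h1, h2⟩
      exact ⟨h1, h2⟩
    exact ((List.finite_length_le V m).prod (List.finite_length_eq V k)).subset h1
  set fR : List V × List V → Set (List V) := fun p =>
    {x | ∃ y ∈ (L ∩ {w : List V | ∃ δ β, w = δ ++ (p.1 ++ p.2) ++ β ++ rc bar p.2}),
      x = y ++ rc bar p.1} with hfR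
  set fL : List V × List V → Set (List V) := fun p =>
    {x | ∃ y ∈ (L ∩ {w : List V | ∃ β δ, w = p.2 ++ β ++ (rc bar p.2 ++ p.1) ++ δ}),
      x = rc bar p.1 ++ y} with hfL
  set gR : List V × List V → Set (List V) := fun p =>
    {w : List V | ∃ δ β, w = δ ++ (p.1 ++ p.2) ++ β ++ rc bar p.2} with hgR
  set gL : List V × List V → Set (List V) := fun p =>
    {w : List V | ∃ β δ, w = p.2 ++ β ++ (rc bar p.2 ++ p.1) ++ δ} with hgL
  set R1 : Set (List V) := ⋃ p ∈ S, fR p with hR1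
  set R2 : Set (List V) := ⋃ p ∈ S, fL p with hR2
  set DR : Set (List V) := ⋃ p ∈ S, gR p with hDR
  set DL : Set (List V) := ⋃ p ∈ S, gL p with hDL
  -- characterization of DR
  have hDRmem : ∀ w : List V, w ∈ DR ↔ hasRightDecomp bar m k w := by
    intro w
    constructor
    · intro hw
      simp only [hDR, Set.mem_iUnion, exists_prop] at hw
      obtain ⟨p, hpS, δ, β, hw⟩ := hw
      exact ⟨δ, p.1, p.2, β, by rw [hw]; simp [List.append_assoc], hpS.2, hpS.1⟩
    · rintro ⟨δ, γ, α, β, hw, hα, hγ⟩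
      exact Set.mem_biUnion (show (γ, α) ∈ S from ⟨hγ, hα⟩)
        ⟨δ, β, by rw [hw]; simp [List.append_assoc]⟩
  have hDLmem : ∀ w : List V, w ∈ DL ↔ hasLeftDecomp bar m k w := by
    intro w
    constructor
    · intro hw
      simp only [hDL, Set.mem_iUnion, exists_prop] at hw
      obtain ⟨p, hpS, β, δ, hw⟩ := hw
      exact ⟨p.2, β, p.1, δ, by rw [hw]; simp [List.append_assoc], hpS.2, hpS.1⟩
    · rintro ⟨α, β, γ, δ, hw, hα, hγ⟩
      exact Set.mem_biUnion (show (γ, α) ∈ S from ⟨hγ, hα⟩)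
        ⟨β, δ, by rw [hw]; simp [List.append_assoc]⟩
  -- the right union
  have hr : (⋃ w ∈ L, rHI bar m k w) = R1 ∪ (L ∩ DRᶜ) := by
    ext v
    simp only [Set.mem_iUnion, exists_prop]
    constructor
    · rintro ⟨w, hwL, hv⟩
      by_cases hd : hasRightDecomp bar m k w
      · rw [rHI, if_pos hd] at hv
        obtain ⟨δ, γ, α, β, hw, hα, hγ, rfl⟩ := hv
        left
        refine Set.mem_biUnion (show (γ, α) ∈ S from ⟨hγ, hα⟩) ?_
        exact ⟨w, ⟨hwL, ⟨δ, β, by rw [hw]; simp [List.append_assoc]⟩⟩, rfl⟩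
      · rw [rHI, if_neg hd] at hv
        rw [Set.mem_singleton_iff] at hv
        subst hv
        exact Or.inr ⟨hwL, fun hc => hd ((hDRmem v).mp hc)⟩
    · rintro (h | ⟨hvL, hvc⟩)
      · simp only [hR1, Set.mem_iUnion, exists_prop] at h
        obtain ⟨p, hpS, y, ⟨hyL, δ, β, hy⟩, rfl⟩ := h
        refine ⟨y, hyL, ?_⟩
        have hd : hasRightDecomp bar m k y :=
          ⟨δ, p.1, p.2, β, by rw [hy]; simp [List.append_assoc], hpS.2, hpS.1⟩
        rw [rHI, if_pos hd]
        exact ⟨δ, p.1, p.2, β, by rw [hy]; simp [List.append_assoc], hpS.2, hpS.1, rfl⟩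
      · refine ⟨v, hvL, ?_⟩
        have hd : ¬ hasRightDecomp bar m k v := fun hd => hvc ((hDRmem v).mpr hd)
        rw [rHI, if_neg hd]
        rfl
  -- the left union
  have hl : (⋃ w ∈ L, lHI bar m k w) = R2 ∪ (L ∩ DLᶜ) := by
    ext v
    simp only [Set.mem_iUnion, exists_prop]
    constructor
    · rintro ⟨w, hwL, hv⟩
      by_cases hd : hasLeftDecomp bar m k w
      · rw [lHI, if_pos hd] at hv
        obtain ⟨α, β, γ, δ, hw, hα, hγ, rfl⟩ := hv
        left
        refine Set.mem_biUnion (show (γ, α) ∈ S from ⟨hγ, hα⟩) ?_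
        exact ⟨w, ⟨hwL, ⟨β, δ, by rw [hw]; simp [List.append_assoc]⟩⟩, rfl⟩
      · rw [lHI, if_neg hd] at hv
        rw [Set.mem_singleton_iff] at hv
        subst hv
        exact Or.inr ⟨hwL, fun hc => hd ((hDLmem v).mp hc)⟩
    · rintro (h | ⟨hvL, hvc⟩)
      · simp only [hR2, Set.mem_iUnion, exists_prop] at h
        obtain ⟨p, hpS, y, ⟨hyL, β, δ, hy⟩, rfl⟩ := h
        refine ⟨y, hyL, ?_⟩
        have hd : hasLeftDecomp bar m k y :=
          ⟨p.2, β, p.1, δ, by rw [hy]; simp [List.append_assoc], hpS.2, hpS.1⟩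
        rw [lHI, if_pos hd]
        exact ⟨p.2, β, p.1, δ, by rw [hy]; simp [List.append_assoc], hpS.2, hpS.1, rfl⟩
      · refine ⟨v, hvL, ?_⟩
        have hd : ¬ hasLeftDecomp bar m k v := fun hd => hvc ((hDLmem v).mpr hd)
        rw [lHI, if_neg hd]
        rfl
  have hmain : HIL bar m k L = (R1 ∪ (L ∩ DRᶜ)) ∪ (R2 ∪ (L ∩ DLᶜ)) := by
    rw [← hr, ← hl]
    ext v
    simp only [HIL, HI, Set.mem_iUnion, exists_prop, Set.mem_union]
    constructor
    · rintro ⟨w, hwL, hv | hv⟩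
      · exact Or.inl ⟨w, hwL, hv⟩
      · exact Or.inr ⟨w, hwL, hv⟩
    · rintro (⟨w, hwL, hv⟩ | ⟨w, hwL, hv⟩)
      · exact ⟨w, hwL, Or.inl hv⟩
      · exact ⟨w, hwL, Or.inr hv⟩
  rw [hmain]
  have hregR1 : Language.IsRegular (lang R1) := by
    refine isRegular_biUnion hSfin fR (fun p => ?_)
    exact isRegular_app (rc bar p.1) (isRegular_inter hL (isRegular_patR (p.1 ++ p.2) (rc bar p.2)))
  have hregR2 : Language.IsRegular (lang R2) := by
    refine isRegular_biUnion hSfin fL (fun p => ?_)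
    exact isRegular_prep (rc bar p.1) (isRegular_inter hL (isRegular_patL p.2 (rc bar p.2 ++ p.1)))
  have hregDR : Language.IsRegular (lang DR) :=
    isRegular_biUnion hSfin gR (fun p => isRegular_patR (p.1 ++ p.2) (rc bar p.2))
  have hregDL : Language.IsRegular (lang DL) :=
    isRegular_biUnion hSfin gL (fun p => isRegular_patL p.2 (rc bar p.2 ++ p.1))
  exact isRegular_union (isRegular_union hregR1 (isRegular_inter hL (isRegular_compl hregDR)))
    (isRegular_union hregR2 (isRegular_inter hL (isRegular_compl hregDL)))


end Hairpin
end

section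
/- A language L ⊆ V* is regular if and only if there exist an alphabet V' containing a distinguished symbol #, a subset V'' ⊆ V', a word w ∈ (V')*, and a weak coding h : V' → V ∪ {λ} such that L = h( rHI*_{1,1}(w) ∩ (V' − {#})* V'' ). -/
open scoped Classical

namespace Hairpin

variable {V : Type}

section Aux1
variable {V : Type}
-- a one-step append condition
def CanApp (bar : V → V) (W : List V) (c : V) : Prop :=
  ∃ a, W.getLast? = some (bar a) ∧ [c, a] <:+: W.dropLast

lemma canApp_iff_decomp (bar : V → V) (W : List V) (c : V) :
    CanApp bar W c ↔ ∃ a δ β, W = δ ++ [c, a] ++ β ++ [bar a] := by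
  constructor
  · rintro ⟨a, hl, δ, β, hW⟩
    rcases W.eq_nil_or_concat with rfl | ⟨W', x, rfl⟩
    · simp at hl
    · simp only [List.concat_eq_append] at hl hW ⊢
      rw [List.getLast?_concat] at hl
      obtain rfl : x = bar a := by injection hl
      rw [List.dropLast_concat] at hW
      exact ⟨a, δ, β, by simp [hW]⟩
  · rintro ⟨a, δ, β, rfl⟩
    refine ⟨a, ?_, δ, β, ?_⟩
    · rw [show δ ++ [c, a] ++ β ++ [bar a] = (δ ++ [c, a] ++ β) ++ [bar a] by simp,
        List.getLast?_concat]
    · rw [show δ ++ [c, a] ++ β ++ [bar a] = (δ ++ [c, a] ++ β) ++ [bar a] by simp,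
        List.dropLast_concat]

lemma rHI_eq (bar : V → V) (W : List V) :
    rHI bar 1 1 W = {W} ∪ {v | ∃ c, CanApp bar W c ∧ v = W ++ [bar c]} := by
  simp only [canApp_iff_decomp]
  rw [rHI]
  split_ifs with h
  · ext v
    simp only [Set.mem_setOf_eq, Set.mem_union, Set.mem_singleton_iff]
    constructor
    · rintro ⟨δ, γ, α, β, hW, hα, hγ, rfl⟩
      obtain ⟨a, rfl⟩ : ∃ a, α = [a] := List.length_eq_one_iff.1 hα
      interval_cases hl : γ.length
      · left; obtain rfl : γ = [] := List.length_eq_zero_iff.1 hl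
        simp [rc]
      · obtain ⟨c, rfl⟩ : ∃ c, γ = [c] := List.length_eq_one_iff.1 hl
        right
        exact ⟨c, ⟨a, δ, β, by simpa [rc] using hW⟩, by simp [rc]⟩
    · rintro (rfl | ⟨c, ⟨a, δ, β, hW⟩, rfl⟩)
      · obtain ⟨δ, γ, α, β, hW, hα, hγ⟩ := h
        exact ⟨δ ++ γ, [], α, β, by simpa using hW, hα, by simp [rc]⟩
      · exact ⟨δ, [c], [a], β, by simpa [rc] using hW, rfl, by simp, by simp [rc]⟩
  · ext v
    simp only [Set.mem_singleton_iff, Set.mem_union, Set.mem_setOf_eq]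
    constructor
    · exact fun hv => Or.inl hv
    · rintro (rfl | ⟨c, ⟨a, δ, β, hW⟩, rfl⟩)
      · rfl
      · exact absurd ⟨δ, [c], [a], β, by simpa [rc] using hW, rfl, by simp⟩ h


inductive Reach_s16 (bar : V → V) (w : List V) : List V → Prop
  | base : Reach_s16 bar w w
  | step {W c} : Reach_s16 bar w W → CanApp bar W c → Reach_s16 bar w (W ++ [bar c])

lemma mem_rHI_self (bar : V → V) (W : List V) : W ∈ rHI bar 1 1 W := by
  rw [rHI_eq]; exact Or.inl rfl

lemma rHIstar_eq_reach (bar : V → V) (w : List V) :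
    rHIstar bar 1 1 w = {W | Reach_s16 bar w W} := by
  ext W
  simp only [rHIstar, Set.mem_iUnion, Set.mem_setOf_eq]
  constructor
  · rintro ⟨n, hn⟩
    induction n generalizing W with
    | zero => obtain rfl : W = w := hn; exact Reach_s16.base
    | succ n ih =>
      simp only [rHIn, Set.mem_iUnion] at hn
      obtain ⟨v, hv, hW⟩ := hn
      rw [rHI_eq] at hW
      rcases hW with rfl | ⟨c, hc, rfl⟩
      · exact ih _ hv
      · exact Reach_s16.step (ih _ hv) hc
  · intro h
    induction h with
    | base => exact ⟨0, rfl⟩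
    | @step W c _ hc ih =>
      obtain ⟨n, hn⟩ := ih
      refine ⟨n + 1, ?_⟩
      simp only [rHIn, Set.mem_iUnion]
      exact ⟨W, hn, by rw [rHI_eq]; exact Or.inr ⟨c, hc, rfl⟩⟩

-- reach words extend w
lemma Reach_s16.prefix {bar : V → V} {w W : List V} (h : Reach_s16 bar w W) : w <+: W := by
  induction h with
  | base => exact List.prefix_rfl
  | step _ _ ih => exact ih.trans (List.prefix_append _ _)


def PairsOf (u : List V) : Set (V × V) := {p | [p.1, p.2] <:+: u}

lemma infix_pair_concat {u : List V} {x c a : V} :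
    [c, a] <:+: (u ++ [x]) ↔ [c, a] <:+: u ∨ (u.getLast? = some c ∧ x = a) := by
  constructor
  · rintro ⟨s, t, hst⟩
    rcases t.eq_nil_or_concat with rfl | ⟨t', y, rfl⟩
    · simp only [List.append_nil] at hst
      right
      have h2 : (s ++ [c]) ++ [a] = u ++ [x] := by simpa using hst
      obtain ⟨h3, h4⟩ := List.append_inj' h2 rfl
      refine ⟨?_, by injection h4 with h5; exact h5.symm⟩
      rw [← h3]; simp
    · left
      simp only [List.concat_eq_append] at hst
      have h2 : (s ++ [c, a] ++ t') ++ [y] = u ++ [x] := by simpa using hst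
      obtain ⟨h3, _⟩ := List.append_inj' h2 rfl
      exact ⟨s, t', h3⟩
  · rintro (h | ⟨h, rfl⟩)
    · exact h.trans (List.prefix_append u [x]).isInfix
    · obtain ⟨u', rfl⟩ := List.getLast?_eq_some_iff.1 h
      exact ⟨u', [], by simp⟩

lemma infix_pair_iff {u : List V} {c a : V} :
    [c, a] <:+: u ↔
      [c, a] <:+: u.dropLast ∨ (u.dropLast.getLast? = some c ∧ u.getLast? = some a) := by
  rcases u.eq_nil_or_concat with rfl | ⟨u', x, rfl⟩
  · constructor
    · rintro ⟨s, t, hst⟩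
      have := congrArg List.length hst; simp at this
    · rintro (⟨s, t, hst⟩ | ⟨h, _⟩)
      · have := congrArg List.length hst; simp at this
      · simp at h
  · simp only [List.concat_eq_append, List.dropLast_concat, List.getLast?_concat]
    rw [infix_pair_concat]
    constructor
    · rintro (h | ⟨h, rfl⟩)
      · exact Or.inl h
      · exact Or.inr ⟨h, rfl⟩
    · rintro (h | ⟨h, hx⟩)
      · exact Or.inl h
      · exact Or.inr ⟨h, by simpa using hx⟩

abbrev AbsState (V : Type) := Option V × Option V × Set (V × V)

noncomputable def absW (u : List V) : AbsState V :=
  (u.dropLast.getLast?, u.getLast?, PairsOf u.dropLast)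

def appA (bar : V → V) (s : AbsState V) (z : V) : Prop :=
  ∃ c a, z = bar c ∧ s.2.1 = some (bar a) ∧ (c, a) ∈ s.2.2

def updA (s : AbsState V) (z : V) : AbsState V :=
  (s.2.1, some z, s.2.2 ∪ {p | s.1 = some p.1 ∧ s.2.1 = some p.2})

lemma absW_append (u : List V) (z : V) : absW (u ++ [z]) = updA (absW u) z := by
  unfold absW updA
  simp only [List.dropLast_concat, List.getLast?_concat]
  refine Prod.ext rfl (Prod.ext rfl ?_)
  ext p
  simp only [PairsOf, Set.mem_setOf_eq, Set.mem_union]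
  exact infix_pair_iff

lemma appA_absW_iff (bar : V → V) (W : List V) (z : V) :
    appA bar (absW W) z ↔ ∃ c, z = bar c ∧ CanApp bar W c := by
  unfold appA absW CanApp PairsOf
  constructor
  · rintro ⟨c, a, rfl, h1, h2⟩; exact ⟨c, rfl, a, h1, h2⟩
  · rintro ⟨c, rfl, a, h1, h2⟩; exact ⟨c, a, rfl, h1, h2⟩

noncomputable def hairDFA (bar : V → V) (w : List V) :
    DFA V (Option (Fin (w.length + 1) ⊕ AbsState V)) where
  step q x :=
    match q with
    | none => none
    | some (Sum.inl i) =>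
        if h : (i : ℕ) < w.length then
          (if x = w.get ⟨i, h⟩ then some (Sum.inl ⟨(i : ℕ) + 1, by omega⟩) else none)
        else
          (if appA bar (absW w) x then some (Sum.inr (updA (absW w) x)) else none)
    | some (Sum.inr s) => if appA bar s x then some (Sum.inr (updA s x)) else none
  start := some (Sum.inl ⟨0, by omega⟩)
  accept := {q | q = some (Sum.inl (Fin.last w.length)) ∨ ∃ s, q = some (Sum.inr s)}

lemma hairDFA_step_none (bar : V → V) (w : List V) (x : V) :
    (hairDFA bar w).step none x = none := rfl

lemma hairDFA_step_inl_lt (bar : V → V) (w : List V) (x : V) (i : Fin (w.length + 1))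
    (h : (i : ℕ) < w.length) :
    (hairDFA bar w).step (some (Sum.inl i)) x =
      if x = w.get ⟨i, h⟩ then some (Sum.inl ⟨(i : ℕ) + 1, by omega⟩) else none := by
  simp only [hairDFA, dif_pos h]

lemma hairDFA_step_inl_last (bar : V → V) (w : List V) (x : V) (i : Fin (w.length + 1))
    (h : ¬ (i : ℕ) < w.length) :
    (hairDFA bar w).step (some (Sum.inl i)) x =
      if appA bar (absW w) x then some (Sum.inr (updA (absW w) x)) else none := by
  simp only [hairDFA, dif_neg h]

lemma hairDFA_step_inr (bar : V → V) (w : List V) (x : V) (s : AbsState V) :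
    (hairDFA bar w).step (some (Sum.inr s)) x =
      if appA bar s x then some (Sum.inr (updA s x)) else none := rfl

lemma hairDFA_eval_prefix (bar : V → V) (w : List V) :
    ∀ (u : List V) (h : u <+: w),
      (hairDFA bar w).eval u =
        some (Sum.inl ⟨u.length, by have := h.sublist.length_le; omega⟩) := by
  intro u
  induction u using List.reverseRecOn with
  | nil => intro _; rfl
  | append_singleton u x ih =>
    intro h
    have hu : u <+: w := ((u.prefix_append [x]).trans h)
    have hlen : u.length < w.length := by
      have := h.sublist.length_le; simp at this; omega
    rw [DFA.eval_append_singleton, ih hu, hairDFA_step_inl_lt bar w x _ hlen]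
    have hget : x = w.get ⟨u.length, hlen⟩ := by
      have := h.getElem (show u.length < (u ++ [x]).length by simp)
      simpa using this
    rw [if_pos hget]
    simp

lemma hairDFA_eval_reach (bar : V → V) (w : List V) {u : List V} (h : Reach_s16 bar w u) :
    (hairDFA bar w).eval u =
      if u.length = w.length then some (Sum.inl (Fin.last w.length))
      else some (Sum.inr (absW u)) := by
  induction h with
  | base =>
    rw [hairDFA_eval_prefix bar w w List.prefix_rfl, if_pos rfl]
    rfl
  | @step W c hW hc ih =>
    have hWp : w <+: W := hW.prefix
    rw [DFA.eval_append_singleton, ih]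
    have happ : appA bar (absW W) (bar c) := (appA_absW_iff bar W (bar c)).2 ⟨c, rfl, hc⟩
    by_cases hl : W.length = w.length
    · obtain rfl : W = w := (hWp.eq_of_length hl.symm).symm
      rw [if_pos rfl, hairDFA_step_inl_last bar W (bar c) _ (by simp [Fin.last]),
        if_pos happ, ← absW_append, if_neg (by simp)]
    · have hlt : w.length < W.length := by
        have := hWp.sublist.length_le; omega
      rw [if_neg hl, hairDFA_step_inr, if_pos happ, ← absW_append, if_neg (by simp; omega)]

lemma hairDFA_eval_spec (bar : V → V) (w : List V) :
    ∀ u : List V,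
      (u <+: w) ∨ (Reach_s16 bar w u ∧ (hairDFA bar w).eval u = some (Sum.inr (absW u))) ∨
        (hairDFA bar w).eval u = none := by
  intro u
  induction u using List.reverseRecOn with
  | nil => exact Or.inl (List.nil_prefix)
  | append_singleton u x ih =>
    rcases ih with hu | ⟨hr, he⟩ | he
    · by_cases hlen : u.length < w.length
      · by_cases hx : x = w.get ⟨u.length, hlen⟩
        · left
          subst hx
          obtain ⟨t, rfl⟩ := hu
          rcases t with _ | ⟨y, t'⟩
          · simp at hlen
          · have hy : (u ++ y :: t').get ⟨u.length, by simp⟩ = y := by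
              show (u ++ y :: t')[u.length] = y
              rw [List.getElem_append_right (Nat.le_refl _)]
              simp
            rw [hy]
            exact ⟨t', by simp⟩
        · right; right
          rw [DFA.eval_append_singleton, hairDFA_eval_prefix bar w u hu,
            hairDFA_step_inl_lt bar w x _ hlen, if_neg hx]
      · have hlen' : u.length = w.length := by
          have := hu.sublist.length_le; omega
        obtain rfl : u = w := hu.eq_of_length hlen'
        rw [DFA.eval_append_singleton, hairDFA_eval_prefix bar u u List.prefix_rfl,
          hairDFA_step_inl_last bar u x _ (by simp)]
        by_cases happ : appA bar (absW u) x
        · right; left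
          obtain ⟨c, rfl, hc⟩ := (appA_absW_iff bar u x).1 happ
          exact ⟨Reach_s16.step Reach_s16.base hc, by rw [if_pos happ, ← absW_append]⟩
        · right; right; rw [if_neg happ]
    · rw [DFA.eval_append_singleton, he, hairDFA_step_inr]
      by_cases happ : appA bar (absW u) x
      · right; left
        obtain ⟨c, rfl, hc⟩ := (appA_absW_iff bar u x).1 happ
        exact ⟨Reach_s16.step hr hc, by rw [if_pos happ, ← absW_append]⟩
      · right; right; rw [if_neg happ]
    · right; right
      rw [DFA.eval_append_singleton, he, hairDFA_step_none]

lemma hairDFA_accepts (bar : V → V) (w : List V) :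
    (hairDFA bar w).accepts = {u : List V | Reach_s16 bar w u} := by
  ext u
  rw [DFA.mem_accepts]
  constructor
  · intro hacc
    rcases hairDFA_eval_spec bar w u with hu | ⟨hr, _⟩ | he
    · rw [hairDFA_eval_prefix bar w u hu] at hacc
      rcases hacc with h1 | ⟨s, h1⟩
      · have : u.length = w.length := by
          have := congrArg (fun q => q) h1
          injection h1 with h2
          injection h2 with h3
          have := congrArg Fin.val h3
          simpa [Fin.last] using this
        have : u = w := hu.eq_of_length this
        subst this
        exact Reach_s16.base
      · exact absurd h1 (by simp)
    · exact hr
    · rw [he] at hacc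
      rcases hacc with h1 | ⟨s, h1⟩ <;> simp at h1
  · intro hr
    rw [hairDFA_eval_reach bar w hr]
    by_cases hl : u.length = w.length
    · rw [if_pos hl]; exact Or.inl rfl
    · rw [if_neg hl]; exact Or.inr ⟨_, rfl⟩



end Aux1

section Aux2
variable {α : Type} {β : Type} {σ σ₁ σ₂ : Type}
def prodDFA (M₁ : DFA α σ₁) (M₂ : DFA α σ₂) : DFA α (σ₁ × σ₂) where
  step q a := (M₁.step q.1 a, M₂.step q.2 a)
  start := (M₁.start, M₂.start)
  accept := {q | q.1 ∈ M₁.accept ∧ q.2 ∈ M₂.accept}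

lemma prodDFA_eval (M₁ : DFA α σ₁) (M₂ : DFA α σ₂) (u : List α) :
    (prodDFA M₁ M₂).eval u = (M₁.eval u, M₂.eval u) := by
  induction u using List.reverseRecOn with
  | nil => rfl
  | append_singleton u x ih =>
    simp only [DFA.eval_append_singleton, ih]
    rfl

lemma prodDFA_accepts (M₁ : DFA α σ₁) (M₂ : DFA α σ₂) :
    (prodDFA M₁ M₂).accepts = M₁.accepts ⊓ M₂.accepts := by
  ext u
  simp only [DFA.mem_accepts, prodDFA_eval]
  exact Iff.rfl

lemma isRegular_inter_s16 {L₁ L₂ : Language α} (h₁ : L₁.IsRegular) (h₂ : L₂.IsRegular) :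
    Language.IsRegular (L₁ ⊓ L₂) := by
  obtain ⟨σ₁, f₁, M₁, rfl⟩ := h₁
  obtain ⟨σ₂, f₂, M₂, rfl⟩ := h₂
  exact ⟨σ₁ × σ₂, by infer_instance, prodDFA M₁ M₂, prodDFA_accepts M₁ M₂⟩

-- image under filterMap
def imgNFA (M : DFA α σ) (h : α → Option β) : NFA β σ where
  step q b := {q' | ∃ u : List α, u.filterMap h = [b] ∧ M.evalFrom q u = q'}
  start := {q | ∃ u : List α, u.filterMap h = [] ∧ M.eval u = q}
  accept := {q | ∃ u : List α, u.filterMap h = [] ∧ M.evalFrom q u ∈ M.accept}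

lemma filterMap_eq_concat {h : α → Option β} {u : List α} {x : List β} {b : β}
    (H : u.filterMap h = x ++ [b]) :
    ∃ u₁ c u₂, u = u₁ ++ c :: u₂ ∧ u₁.filterMap h = x ∧ h c = some b ∧
      u₂.filterMap h = [] := by
  induction u using List.reverseRecOn generalizing x with
  | nil => simp at H
  | append_singleton u d ih =>
    rcases hd : h d with _ | v
    · rw [List.filterMap_append] at H
      simp only [List.filterMap_cons, hd, List.filterMap_nil, List.append_nil] at H
      obtain ⟨u₁, c, u₂, rfl, h1, h2, h3⟩ := ih H
      exact ⟨u₁, c, u₂ ++ [d], by simp, h1, h2, by simp [List.filterMap_append, h3, hd]⟩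
    · rw [List.filterMap_append] at H
      simp only [List.filterMap_cons, hd, List.filterMap_nil, List.append_nil] at H
      have h1 := List.append_inj' H rfl
      obtain ⟨h2, h3⟩ := h1
      refine ⟨u, d, [], by simp, h2, ?_, rfl⟩
      rw [hd]; injection h3 with h4; rw [h4]

lemma imgNFA_eval (M : DFA α σ) (h : α → Option β) (x : List β) (q : σ) :
    q ∈ (imgNFA M h).eval x ↔ ∃ u : List α, u.filterMap h = x ∧ M.eval u = q := by
  induction x using List.reverseRecOn generalizing q with
  | nil => exact Iff.rfl
  | append_singleton x b ih =>
    rw [NFA.eval_append_singleton, NFA.mem_stepSet]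
    constructor
    · rintro ⟨t, ht, u', hu1, hu2⟩
      obtain ⟨u, hu3, hu4⟩ := (ih t).1 ht
      refine ⟨u ++ u', ?_, ?_⟩
      · rw [List.filterMap_append, hu3, hu1]
      · rw [DFA.eval, DFA.evalFrom_of_append, ← DFA.eval, hu4, hu2]
    · rintro ⟨u, hu1, hu2⟩
      obtain ⟨u₁, c, u₂, rfl, k1, k2, k3⟩ := filterMap_eq_concat hu1
      refine ⟨M.eval u₁, (ih _).2 ⟨u₁, k1, rfl⟩, c :: u₂, ?_, ?_⟩
      · simp [List.filterMap_cons, k2, k3]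
      · rw [← hu2, DFA.eval, show u₁ ++ c :: u₂ = u₁ ++ (c :: u₂) by rfl,
          DFA.evalFrom_of_append]

lemma imgNFA_accepts (M : DFA α σ) (h : α → Option β) :
    (imgNFA M h).accepts = (fun u : List α => u.filterMap h) '' M.accepts := by
  ext x
  rw [NFA.mem_accepts]
  constructor
  · rintro ⟨q, ⟨u', hu1, hu2⟩, hq⟩
    obtain ⟨u, h1, h2⟩ := (imgNFA_eval M h x q).1 hq
    refine ⟨u ++ u', ?_, ?_⟩
    · show M.eval (u ++ u') ∈ M.accept; rw [DFA.eval, DFA.evalFrom_of_append, ← DFA.eval, h2]; exact hu2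
    · show (u ++ u').filterMap h = x
      rw [List.filterMap_append, h1, hu1, List.append_nil]
  · rintro ⟨u, hu, rfl⟩
    exact ⟨M.eval u, ⟨[], rfl, hu⟩, (imgNFA_eval M h _ _).2 ⟨u, rfl, rfl⟩⟩

lemma isRegular_image_filterMap [Fintype β] {L : Language α} (hL : L.IsRegular)
    (h : α → Option β) :
    Language.IsRegular ((fun u : List α => u.filterMap h) '' L) := by
  obtain ⟨σ, f, M, rfl⟩ := hL
  refine ⟨Set σ, by infer_instance, (imgNFA M h).toDFA, ?_⟩
  rw [NFA.toDFA_correct, imgNFA_accepts]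

-- the end-filter language
noncomputable def endDFA (hash : α) (V'' : Set α) : DFA α (Option (Prop × α)) where
  step q x :=
    match q with
    | none => some (True, x)
    | some (p, l) => some (p ∧ l ≠ hash, x)
  start := none
  accept := {q | ∃ (p : Prop) (l : α), q = some (p, l) ∧ p ∧ l ∈ V''}

lemma endDFA_eval (hash : α) (V'' : Set α) (u : List α) (x : α) :
    (endDFA hash V'' : DFA α _).eval (u ++ [x]) = some ((hash ∉ u : Prop), x) := by
  induction u using List.reverseRecOn generalizing x with
  | nil =>
    show some ((True : Prop), x) = _
    simp
  | append_singleton u y ih =>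
    rw [show u ++ [y] ++ [x] = (u ++ [y]) ++ [x] by simp, DFA.eval_append_singleton, ih]
    show some (((hash ∉ u) ∧ y ≠ hash : Prop), x) = _
    congr 1
    refine Prod.ext ?_ rfl
    simp only [eq_iff_iff, List.mem_append, List.mem_singleton]
    constructor
    · rintro ⟨h1, h2⟩ (h3 | h3)
      · exact h1 h3
      · exact h2 h3.symm
    · intro h1
      exact ⟨fun h2 => h1 (Or.inl h2), fun h2 => h1 (Or.inr h2.symm)⟩

lemma endDFA_accepts (hash : α) (V'' : Set α) :
    (endDFA hash V'').accepts =
      {x : List α | ∃ (x' : List α) (a : α), x = x' ++ [a] ∧ a ∈ V'' ∧ hash ∉ x'} := by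
  ext x
  rw [DFA.mem_accepts]
  induction x using List.reverseRecOn with
  | nil =>
    constructor
    · rintro ⟨p, l, hq, _⟩
      exact absurd hq (by simp [DFA.eval, endDFA])
    · rintro ⟨x', a, hx, _⟩
      exact absurd hx (by simp)
  | append_singleton u y _ =>
    rw [endDFA_eval]
    constructor
    · rintro ⟨p, l, hq, hp, hl⟩
      injection hq with hq'
      have h1 : (hash ∉ u : Prop) = p := congrArg Prod.fst hq'
      have h2 : y = l := congrArg Prod.snd hq'
      exact ⟨u, y, rfl, by rw [h2]; exact hl, by rw [h1]; exact hp⟩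
    · rintro ⟨x', a, hx, ha, hh⟩
      obtain ⟨h3, h4⟩ := List.append_inj' hx rfl
      subst h3
      have h5 : y = a := by injection h4
      refine ⟨(hash ∉ u : Prop), y, rfl, hh, ?_⟩
      rw [h5]; exact ha



end Aux2

section Aux3
variable {V : Type} {σ : Type}
/-- adjacent pairs of a list -/
def adjPairs : List V → List (V × V)
  | x :: y :: l => (x, y) :: adjPairs (y :: l)
  | _ => []

lemma infix_pair_iff_adj {u : List V} {c a : V} :
    [c, a] <:+: u ↔ (c, a) ∈ adjPairs u := by
  induction u with
  | nil =>
    simp only [adjPairs, List.not_mem_nil, iff_false]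
    rintro ⟨s, t, hst⟩
    have := congrArg List.length hst; simp at this
  | cons x l ih =>
    rw [List.infix_cons_iff]
    rcases l with _ | ⟨y, t⟩
    · simp only [adjPairs, List.not_mem_nil, iff_false]
      rintro (⟨s, hs⟩ | ⟨s, t, hst⟩)
      · have := congrArg List.length hs; simp at this
      · have := congrArg List.length hst; simp at this
    · show _ ↔ (c, a) ∈ (x, y) :: adjPairs (y :: t)
      rw [List.mem_cons, ← ih]
      constructor
      · rintro (⟨s, hs⟩ | h)
        · left
          have h1 : c = x := by
            have := congrArg (fun l => l.head?) hs; simpa using this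
          have h2 : a = y := by
            rw [h1] at hs
            have := congrArg (fun l => l.tail.head?) hs; simpa using this
          rw [h1, h2]
        · exact Or.inr h
      · rintro (h | h)
        · left
          obtain ⟨h1, h2⟩ := Prod.mk.injEq _ _ _ _ ▸ h
          exact ⟨t, by rw [h1, h2]; rfl⟩
        · exact Or.inr h

section Construction

variable (M : DFA V σ) [Fintype V] [Fintype σ]

def hbar : (Bool ⊕ σ × V) × Bool → (Bool ⊕ σ × V) × Bool := fun p => (p.1, !p.2)

lemma hbar_invol (p : (Bool ⊕ σ × V) × Bool) : hbar (hbar p) = p := by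
  simp [hbar]

def hA (x : Bool ⊕ σ × V) : (Bool ⊕ σ × V) × Bool := (x, false)
def hAb (x : Bool ⊕ σ × V) : (Bool ⊕ σ × V) × Bool := (x, true)

lemma hbar_hA (x : Bool ⊕ σ × V) : hbar (hA x) = hAb x := rfl
lemma hbar_hAb (x : Bool ⊕ σ × V) : hbar (hAb x) = hA x := rfl

/-- the list of needed edges -/
noncomputable def edgeList : List ((Bool ⊕ σ × V) × (Bool ⊕ σ × V)) :=
  ((Finset.univ : Finset (σ × V × V)).toList.map
      (fun t => (Sum.inr (M.step t.1 t.2.2, t.2.2), Sum.inr (t.1, t.2.1)))) ++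
    ((Finset.univ : Finset V).toList.map
      (fun v => (Sum.inr (M.step M.start v, v), Sum.inl true)))

lemma mem_edgeList_iff (e : (Bool ⊕ σ × V) × (Bool ⊕ σ × V)) :
    e ∈ edgeList M ↔
      (∃ q u v, e = (Sum.inr (M.step q v, v), Sum.inr (q, u))) ∨
        (∃ v, e = (Sum.inr (M.step M.start v, v), Sum.inl true)) := by
  unfold edgeList
  simp only [List.mem_append, List.mem_map, Finset.mem_toList, Finset.mem_univ, true_and]
  constructor
  · rintro (⟨⟨q, u, v⟩, he⟩ | ⟨v, he⟩)
    · exact Or.inl ⟨q, u, v, he.symm⟩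
    · exact Or.inr ⟨v, he.symm⟩
  · rintro (⟨q, u, v, he⟩ | ⟨v, he⟩)
    · exact Or.inl ⟨⟨q, u, v⟩, he.symm⟩
    · exact Or.inr ⟨v, he.symm⟩

noncomputable def hwcore : List ((Bool ⊕ σ × V) × Bool) :=
  (edgeList M).flatMap (fun e => [hA (Sum.inl false), hA e.1, hA e.2]) ++
    [hA (Sum.inl false), hA (Sum.inl true)]

noncomputable def hw : List ((Bool ⊕ σ × V) × Bool) := hwcore M ++ [hAb (Sum.inl true)]

lemma hw_dropLast : (hw M).dropLast = hwcore M := by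
  unfold hw; rw [List.dropLast_concat]

lemma hw_getLast? : (hw M).getLast? = some (hAb (Sum.inl true)) := by
  unfold hw; rw [List.getLast?_concat]

lemma hwcore_unbarred : ∀ p ∈ hwcore M, p.2 = false := by
  intro p hp
  unfold hwcore at hp
  rcases List.mem_append.1 hp with h | h
  · obtain ⟨e, _, he⟩ := List.mem_flatMap.1 h
    simp only [List.mem_cons, List.not_mem_nil, or_false] at he
    rcases he with h1 | h1 | h1 <;> (rw [h1]; rfl)
  · simp only [List.mem_cons, List.not_mem_nil, or_false] at h
    rcases h with h1 | h1 <;> (rw [h1]; rfl)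

lemma adjPairs_hwcore :
    adjPairs (hwcore M) =
      (edgeList M).flatMap (fun e =>
        [(hA (Sum.inl false), hA e.1), (hA e.1, hA e.2), (hA e.2, hA (Sum.inl false))]) ++
        [(hA (Sum.inl false), hA (Sum.inl true))] := by
  unfold hwcore
  generalize edgeList M = l
  induction l with
  | nil => simp [adjPairs]
  | cons e l ih =>
    have hhead : ∃ t, l.flatMap (fun e => [hA (Sum.inl false), hA e.1, hA e.2]) ++
        [hA (Sum.inl false), hA (Sum.inl true)] = (hA (Sum.inl false) : (Bool ⊕ σ × V) × Bool) :: t := by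
      rcases l with _ | ⟨e', l'⟩
      · exact ⟨[hA (Sum.inl true)], rfl⟩
      · exact ⟨_, rfl⟩
    obtain ⟨t, ht⟩ := hhead
    simp only [List.flatMap_cons, List.append_assoc] at *
    rw [ht] at ih ⊢
    show adjPairs (hA (Sum.inl false) :: hA e.1 :: hA e.2 :: hA (Sum.inl false) :: t) = _
    rw [show adjPairs (hA (Sum.inl false) :: hA e.1 :: hA e.2 :: hA (Sum.inl false) :: t)
        = (hA (Sum.inl false), hA e.1) :: (hA e.1, hA e.2) :: (hA e.2, hA (Sum.inl false)) ::
          adjPairs (hA (Sum.inl false) :: t) from rfl, ih]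
    simp

end Construction


lemma getLast?_cons' (l : List V) (a : V) : (a :: l).getLast? = some (l.getLast?.getD a) := by
  rcases l.eq_nil_or_concat with rfl | ⟨t, y, rfl⟩
  · simp
  · rw [List.concat_eq_append, show a :: (t ++ [y]) = (a :: t) ++ [y] by simp,
      List.getLast?_concat, List.getLast?_concat]
    rfl

lemma pair_infix_of_unbarred {u₁ u₂ : List ((Bool ⊕ σ × V) × Bool)}
    (h2 : ∀ p ∈ u₂, p.2 = true) {c a : (Bool ⊕ σ × V) × Bool} (ha : a.2 = false)
    (h : [c, a] <:+: u₁ ++ u₂) : [c, a] <:+: u₁ := by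
  induction u₂ using List.reverseRecOn with
  | nil => simpa using h
  | append_singleton u₂ z ih =>
    rw [show u₁ ++ (u₂ ++ [z]) = (u₁ ++ u₂) ++ [z] by simp, infix_pair_concat] at h
    rcases h with h | ⟨_, hz⟩
    · exact ih (fun p hp => h2 p (by simp [hp])) h
    · have := h2 z (by simp)
      rw [hz, ha] at this
      exact absurd this (by simp)

section Construction
variable (M : DFA V σ) [Fintype V] [Fintype σ]

/-- last vertex of the walk `v :: ts` -/
def vlast (v : Bool ⊕ σ × V) (ts : List (Bool ⊕ σ × V)) : Bool ⊕ σ × V :=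
  ts.getLast?.getD v

def WalkOK : (Bool ⊕ σ × V) → List (Bool ⊕ σ × V) → Prop
  | _, [] => True
  | v, b :: ts => ((hA b, hA v) ∈ adjPairs (hwcore M) ∧ WalkOK b ts)

lemma walkOK_append {v b : Bool ⊕ σ × V} {ts : List (Bool ⊕ σ × V)}
    (h : WalkOK M v ts) (hb : (hA b, hA (vlast v ts)) ∈ adjPairs (hwcore M)) :
    WalkOK M v (ts ++ [b]) := by
  induction ts generalizing v with
  | nil => exact ⟨by simpa [vlast] using hb, trivial⟩
  | cons b' ts ih =>
    obtain ⟨h1, h2⟩ := h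
    refine ⟨h1, ih h2 ?_⟩
    have : vlast v (b' :: ts) = vlast b' ts := by
      unfold vlast
      rw [getLast?_cons']
      rcases ts.eq_nil_or_concat with rfl | ⟨t, y, rfl⟩
      · simp
      · simp [List.getLast?_concat]
    rwa [this] at hb

lemma tail_barred (ts : List (Bool ⊕ σ × V)) :
    ∀ p ∈ ([hAb (Sum.inl true)] ++ ts.map hAb :
        List ((Bool ⊕ σ × V) × Bool)), p.2 = true := by
  intro p hp
  rcases List.mem_append.1 hp with h | h
  · simp only [List.mem_singleton] at h; rw [h]; rfl
  · obtain ⟨x, _, hx⟩ := List.mem_map.1 h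
    rw [← hx]; rfl

lemma reachW_dropLast (ts : List (Bool ⊕ σ × V)) :
    (hw M ++ ts.map hAb).dropLast =
      hwcore M ++ ([hAb (Sum.inl true)] ++ ts.map hAb).dropLast := by
  rw [show hw M ++ ts.map hAb = hwcore M ++ ([hAb (Sum.inl true)] ++ ts.map hAb) by
    simp [hw]]
  rw [List.dropLast_append_of_ne_nil (by simp : [hAb (Sum.inl true)] ++ ts.map hAb ≠ [])]

lemma reachW_getLast (ts : List (Bool ⊕ σ × V)) :
    (hw M ++ ts.map hAb).getLast? = some (hAb (vlast (Sum.inl true) ts)) := by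
  rcases ts.eq_nil_or_concat with rfl | ⟨t, y, rfl⟩
  · simp only [List.map_nil, List.append_nil]
    rw [hw_getLast?]
    rfl
  · rw [List.concat_eq_append, List.getLast?_append_of_ne_nil _ (by simp)]
    simp [vlast, List.getLast?_concat]

lemma reach_inv {X : List ((Bool ⊕ σ × V) × Bool)}
    (h : Reach_s16 (hbar (V := V) (σ := σ)) (hw M) X) :
    ∃ ts : List (Bool ⊕ σ × V), X = hw M ++ ts.map hAb ∧ WalkOK M (Sum.inl true) ts := by
  induction h with
  | base => exact ⟨[], by simp, trivial⟩
  | @step W c hW hc ih =>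
    obtain ⟨ts, rfl, hts⟩ := ih
    obtain ⟨a, hl, hinf⟩ := hc
    rw [reachW_getLast] at hl
    have ha : a = hA (vlast (Sum.inl true) ts) := by
      injection hl with hl'
      have h := congrArg hbar hl'
      rw [hbar_invol] at h
      exact h.symm
    rw [reachW_dropLast] at hinf
    have hinf2 : [c, a] <:+: hwcore M :=
      pair_infix_of_unbarred
        (fun p hp => tail_barred ts p ((List.dropLast_sublist _).mem hp))
        (by rw [ha]; rfl) hinf
    have hcmem : c ∈ hwcore M := by
      obtain ⟨s, t, hst⟩ := hinf2
      rw [← hst]; simp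
    have hc2 : c.2 = false := hwcore_unbarred M c hcmem
    have hcA : c = hA c.1 := by
      calc c = (c.1, c.2) := rfl
        _ = _ := by rw [hc2]; rfl
    refine ⟨ts ++ [c.1], ?_, ?_⟩
    · rw [show hbar c = hAb c.1 by rw [hcA]; rfl]
      simp
    · refine walkOK_append M hts ?_
      rw [← hcA, ← ha]
      exact infix_pair_iff_adj.1 hinf2
end Construction

section Construction
variable (M : DFA V σ) [Fintype V] [Fintype σ]

def TraceOK : σ → List (Bool ⊕ σ × V) → Prop
  | _, [] => True
  | q, (Sum.inr (q', v)) :: ts => (q' = M.step q v ∧ TraceOK q' ts)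
  | _, (Sum.inl _) :: _ => False

def outV : (Bool ⊕ σ × V) → Option V
  | Sum.inr (_, v) => some v
  | Sum.inl _ => none

lemma mem_adjPairs_iff (c a : (Bool ⊕ σ × V) × Bool) :
    (c, a) ∈ adjPairs (hwcore M) ↔
      ((∃ e ∈ edgeList M, (c = hA (Sum.inl false) ∧ a = hA e.1) ∨
          (c = hA e.1 ∧ a = hA e.2) ∨ (c = hA e.2 ∧ a = hA (Sum.inl false))) ∨
        (c = hA (Sum.inl false) ∧ a = hA (Sum.inl true))) := by
  rw [adjPairs_hwcore]
  simp only [List.mem_append, List.mem_flatMap, List.mem_cons, List.not_mem_nil, or_false,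
    List.mem_singleton, Prod.mk.injEq]

lemma hA_inj {x y : Bool ⊕ σ × V} (h : hA x = hA y) : x = y := congrArg Prod.fst h

lemma walk_to_trace {q : σ} {v : Bool ⊕ σ × V} {ts : List (Bool ⊕ σ × V)}
    (hwk0 : WalkOK M v ts) (hconn : Sum.inl false ∉ v :: ts)
    (hrel : (v = Sum.inl true ∧ q = M.start) ∨ ∃ u, v = Sum.inr (q, u)) :
    TraceOK M q ts := by
  induction ts generalizing q v with
  | nil => trivial
  | cons b ts ih =>
    obtain ⟨hpair, hwk⟩ := hwk0
    have hbconn : b ≠ Sum.inl false := by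
      intro h; exact hconn (by rw [← h]; exact List.mem_cons_of_mem _ List.mem_cons_self)
    have hvconn : v ≠ Sum.inl false := by
      intro h; exact hconn (by rw [← h]; exact List.mem_cons_self)
    have hconn' : ∀ b', b = b' → Sum.inl false ∉ b' :: ts := by
      rintro b' rfl hmem
      exact hconn (List.mem_cons_of_mem _ hmem)
    rcases (mem_adjPairs_iff M _ _).1 hpair with ⟨e, he, hcase⟩ | ⟨h1, _⟩
    · rcases hcase with ⟨h1, _⟩ | ⟨h1, h2⟩ | ⟨_, h2⟩
      · exact absurd (hA_inj h1) hbconn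
      · have hb := hA_inj h1
        have hv := hA_inj h2
        rcases (mem_edgeList_iff M e).1 he with ⟨q₀, u, v₀, he'⟩ | ⟨v₀, he'⟩
        · have he1 : e.1 = Sum.inr (M.step q₀ v₀, v₀) := by rw [he']
          have he2 : e.2 = Sum.inr (q₀, u) := by rw [he']
          rcases hrel with ⟨hv', _⟩ | ⟨u', hv'⟩
          · rw [hv', he2] at hv; exact absurd hv (by simp)
          · have heq : (Sum.inr (q, u') : Bool ⊕ σ × V) = Sum.inr (q₀, u) := by
              rw [← hv', hv, he2]
            have hq : q₀ = q := by
              injection heq with h3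
              exact (congrArg Prod.fst h3).symm
            subst hq
            rw [hb, he1]
            exact ⟨rfl, ih hwk (hconn' _ (by rw [hb, he1]))
              (Or.inr ⟨v₀, by rw [hb, he1]⟩)⟩
        · have he1 : e.1 = Sum.inr (M.step M.start v₀, v₀) := by rw [he']
          have he2 : e.2 = Sum.inl true := by rw [he']
          rcases hrel with ⟨hv', hq⟩ | ⟨u', hv'⟩
          · subst hq
            rw [hb, he1]
            exact ⟨rfl, ih hwk (hconn' _ (by rw [hb, he1]))
              (Or.inr ⟨v₀, by rw [hb, he1]⟩)⟩
          · rw [hv', he2] at hv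
            exact absurd hv (by simp)
      · exact absurd (hA_inj h2) hvconn
    · exact absurd (hA_inj h1) hbconn

lemma trace_all_inr {q : σ} {ts : List (Bool ⊕ σ × V)} (h : TraceOK M q ts) :
    ∀ x ∈ ts, ∃ p u, x = Sum.inr (p, u) := by
  induction ts generalizing q with
  | nil => intro x hx; exact absurd hx List.not_mem_nil
  | cons b ts ih =>
    intro x hx
    rcases b with b | ⟨q', v⟩
    · exact absurd h (by simp [TraceOK])
    · obtain ⟨h1, h2⟩ := h
      rcases List.mem_cons.1 hx with rfl | hx'
      · exact ⟨q', v, rfl⟩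
      · exact ih h2 x hx'

lemma trace_eval {q : σ} {ts : List (Bool ⊕ σ × V)} (h : TraceOK M q ts)
    {p : σ} {u : V} (hl : ts.getLast? = some (Sum.inr (p, u))) :
    M.evalFrom q (ts.filterMap outV) = p := by
  induction ts generalizing q with
  | nil => simp at hl
  | cons b ts ih =>
    rcases b with b | ⟨q', v⟩
    · exact absurd h (by simp [TraceOK])
    · obtain ⟨h1, h2⟩ := h
      have hfm : (Sum.inr (q', v) :: ts).filterMap outV = v :: ts.filterMap outV := by
        simp [outV, List.filterMap_cons]
      rw [hfm]
      have hstep : M.evalFrom q (v :: ts.filterMap outV) =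
          M.evalFrom (M.step q v) (ts.filterMap outV) := rfl
      rw [hstep, ← h1]
      rcases ts.eq_nil_or_concat with rfl | ⟨t, y, rfl⟩
      · simp only [List.getLast?_singleton] at hl
        injection hl with hl'
        injection hl' with hl''
        have := congrArg Prod.fst hl''
        simp only [List.filterMap_nil]
        exact this
      · rw [getLast?_cons'] at hl
        rw [List.concat_eq_append, List.getLast?_concat] at hl
        exact ih h2 (by rw [List.concat_eq_append, List.getLast?_concat]; exact hl)

end Construction

section Construction
variable (M : DFA V σ) [Fintype V] [Fintype σ]

def tsOf : σ → List V → List (Bool ⊕ σ × V)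
  | _, [] => []
  | q, v :: u => Sum.inr (M.step q v, v) :: tsOf (M.step q v) u

lemma tsOf_filterMap : ∀ (u : List V) (q : σ), (tsOf M q u).filterMap outV = u := by
  intro u
  induction u with
  | nil => intro q; rfl
  | cons v u ih =>
    intro q
    show (Sum.inr (M.step q v, v) :: tsOf M (M.step q v) u).filterMap outV = v :: u
    rw [List.filterMap_cons]
    simp only [outV]
    rw [ih]

lemma tsOf_getLast? : ∀ (u : List V) (q : σ), u ≠ [] →
    ∃ vl, (tsOf M q u).getLast? = some (Sum.inr (M.evalFrom q u, vl)) := by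
  intro u
  induction u with
  | nil => intro q h; exact absurd rfl h
  | cons v u ih =>
    intro q _
    rcases u with _ | ⟨v', u'⟩
    · exact ⟨v, rfl⟩
    · obtain ⟨vl, hvl⟩ := ih (M.step q v) (by simp)
      refine ⟨vl, ?_⟩
      show (Sum.inr (M.step q v, v) :: tsOf M (M.step q v) (v' :: u')).getLast? = _
      rw [getLast?_cons', hvl]
      rfl

lemma vlast_append_singleton (v b : Bool ⊕ σ × V) (ts : List (Bool ⊕ σ × V)) :
    vlast v (ts ++ [b]) = b := by
  unfold vlast
  rw [List.getLast?_concat]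
  rfl

lemma pair_infix_W {c a : (Bool ⊕ σ × V) × Bool} (ts : List (Bool ⊕ σ × V))
    (h : (c, a) ∈ adjPairs (hwcore M)) :
    [c, a] <:+: (hw M ++ ts.map hAb).dropLast := by
  rw [reachW_dropLast]
  exact (infix_pair_iff_adj.2 h).trans (List.prefix_append _ _).isInfix

lemma build_reach : ∀ (u : List V) (q : σ) (ts : List (Bool ⊕ σ × V)),
    Reach_s16 (hbar (V := V) (σ := σ)) (hw M) (hw M ++ ts.map hAb) →
    ((vlast (Sum.inl true) ts = Sum.inl true ∧ q = M.start) ∨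
      ∃ u₀, vlast (Sum.inl true) ts = Sum.inr (q, u₀)) →
    Reach_s16 (hbar (V := V) (σ := σ)) (hw M) (hw M ++ (ts ++ tsOf M q u).map hAb) := by
  intro u
  induction u with
  | nil =>
    intro q ts h _
    have : tsOf M q ([] : List V) = [] := rfl
    rw [this]
    simpa using h
  | cons v u ih =>
    intro q ts h hrel
    set b : Bool ⊕ σ × V := Sum.inr (M.step q v, v) with hb
    have hpair : (hA b, hA (vlast (Sum.inl true) ts)) ∈ adjPairs (hwcore M) := by
      rcases hrel with ⟨hvl, rfl⟩ | ⟨u₀, hvl⟩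
      · rw [hvl]
        exact (mem_adjPairs_iff M _ _).2
          (Or.inl ⟨_, (mem_edgeList_iff M _).2 (Or.inr ⟨v, rfl⟩), Or.inr (Or.inl ⟨rfl, rfl⟩)⟩)
      · rw [hvl]
        exact (mem_adjPairs_iff M _ _).2
          (Or.inl ⟨_, (mem_edgeList_iff M _).2 (Or.inl ⟨q, u₀, v, rfl⟩),
            Or.inr (Or.inl ⟨rfl, rfl⟩)⟩)
    have hcan : CanApp (hbar (V := V) (σ := σ)) (hw M ++ ts.map hAb) (hA b) :=
      ⟨hA (vlast (Sum.inl true) ts), by rw [reachW_getLast]; rfl,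
        pair_infix_W M ts hpair⟩
    have hstep := Reach_s16.step h hcan
    have hrw : (hw M ++ ts.map hAb) ++ [hbar (hA b)] = hw M ++ (ts ++ [b]).map hAb := by
      rw [hbar_hA]; simp
    rw [hrw] at hstep
    have := ih (M.step q v) (ts ++ [b]) hstep
      (Or.inr ⟨v, by rw [vlast_append_singleton]⟩)
    rw [show (ts ++ [b]) ++ tsOf M (M.step q v) u = ts ++ (b :: tsOf M (M.step q v) u) by
      simp] at this
    exact this

end Construction

section Construction
variable (M : DFA V σ) [Fintype V] [Fintype σ]

def hh : (Bool ⊕ σ × V) × Bool → Option V := fun p => if p.2 = true then outV p.1 else none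

noncomputable def hV'' : Set ((Bool ⊕ σ × V) × Bool) :=
  {p | (∃ qa va, p = hAb (Sum.inr (qa, va)) ∧ qa ∈ M.accept) ∨
    (p = hAb (Sum.inl true) ∧ M.start ∈ M.accept)}

lemma hh_hA (x : Bool ⊕ σ × V) : hh (hA x) = none := rfl
lemma hh_hAb (x : Bool ⊕ σ × V) : hh (hAb x) = outV x := rfl

lemma filterMap_hh_hw : (hw M).filterMap (hh (V := V) (σ := σ)) = [] := by
  refine List.filterMap_eq_nil_iff.2 ?_
  intro p hp
  unfold hw at hp
  rcases List.mem_append.1 hp with h | h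
  · have h2 := hwcore_unbarred M p h
    show (if p.2 = true then outV p.1 else none) = none
    rw [h2]
    simp
  · simp only [List.mem_singleton] at h
    rw [h]
    rfl

lemma filterMap_hh_map_hAb (ts : List (Bool ⊕ σ × V)) :
    (ts.map hAb).filterMap (hh (V := V) (σ := σ)) = ts.filterMap outV := by
  rw [List.filterMap_map]
  rfl

lemma hhash_ne_hwcore : ∀ p ∈ hwcore M, p ≠ hAb (Sum.inl false) := by
  intro p hp h
  have h2 := hwcore_unbarred M p hp
  rw [h] at h2
  exact absurd h2 (by simp [hAb])

lemma tsOf_all_inr : ∀ (u : List V) (q : σ), ∀ x ∈ tsOf M q u, ∃ p v, x = Sum.inr (p, v) := by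
  intro u
  induction u with
  | nil => intro q x hx; exact absurd hx List.not_mem_nil
  | cons v u ih =>
    intro q x hx
    rcases List.mem_cons.1 hx with rfl | hx'
    · exact ⟨_, _, rfl⟩
    · exact ih _ x hx'

lemma forward_sub : ∀ u : List V, u ∈ M.accepts →
      u ∈ (fun x => x.filterMap (hh (V := V) (σ := σ))) ''
        ({X | Reach_s16 (hbar (V := V) (σ := σ)) (hw M) X} ∩
          {x | ∃ x' a, x = x' ++ [a] ∧ a ∈ hV'' M ∧ hAb (Sum.inl false) ∉ x'}) := by
  intro u hu
  rcases eq_or_ne u [] with rfl | hne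
  · refine ⟨hw M, ⟨Reach_s16.base, hwcore M, hAb (Sum.inl true), rfl, ?_, ?_⟩, filterMap_hh_hw M⟩
    · exact Or.inr ⟨rfl, by rwa [DFA.mem_accepts] at hu⟩
    · intro h; exact hhash_ne_hwcore M _ h rfl
  · set ts := tsOf M M.start u with hts
    have h1 : Reach_s16 (hbar (V := V) (σ := σ)) (hw M) (hw M ++ ts.map hAb) := by
      have := build_reach M u M.start [] (by simpa using Reach_s16.base) (Or.inl ⟨rfl, rfl⟩)
      simpa using this
    have h2 : (hw M ++ ts.map hAb).filterMap (hh (V := V) (σ := σ)) = u := by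
      rw [List.filterMap_append, filterMap_hh_hw, filterMap_hh_map_hAb, hts,
        tsOf_filterMap]
      rfl
    obtain ⟨vl, hvl⟩ := tsOf_getLast? M u M.start hne
    have htsne : ts ≠ [] := by
      intro h; rw [hts] at h; rw [h] at hvl; simp at hvl
    obtain ⟨ts₀, b, hsplit⟩ := ts.eq_nil_or_concat.resolve_left htsne
    rw [List.concat_eq_append] at hsplit
    have hb : b = Sum.inr (M.evalFrom M.start u, vl) := by
      rw [← hts, hsplit, List.getLast?_concat] at hvl
      injection hvl
    refine ⟨hw M ++ ts.map hAb, ⟨h1, hw M ++ ts₀.map hAb, hAb b, ?_, ?_, ?_⟩, h2⟩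
    · rw [hsplit]; simp
    · rw [hb]
      exact Or.inl ⟨_, vl, rfl, by rwa [DFA.mem_accepts] at hu⟩
    · intro hmem
      rcases List.mem_append.1 hmem with h | h
      · unfold hw at h
        rcases List.mem_append.1 h with h' | h'
        · exact hhash_ne_hwcore M _ h' rfl
        · simp only [List.mem_singleton] at h'
          exact absurd (congrArg Prod.fst h') (by simp [hAb])
      · obtain ⟨x, hx, hx2⟩ := List.mem_map.1 h
        obtain ⟨p, v, hpv⟩ := tsOf_all_inr M u M.start x (by
          rw [hts] at hsplit
          have : x ∈ tsOf M M.start u := by rw [hsplit]; exact List.mem_append_left _ hx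
          exact this)
        rw [hpv] at hx2
        exact absurd (congrArg Prod.fst hx2) (by simp [hAb])

lemma forward_sup : ∀ x : List V,
      x ∈ (fun x => x.filterMap (hh (V := V) (σ := σ))) ''
        ({X | Reach_s16 (hbar (V := V) (σ := σ)) (hw M) X} ∩
          {x | ∃ x' a, x = x' ++ [a] ∧ a ∈ hV'' M ∧ hAb (Sum.inl false) ∉ x'}) →
      x ∈ M.accepts := by
  rintro x ⟨X, ⟨hreach, x', a, hxa, haV, hhashn⟩, rfl⟩
  obtain ⟨ts, rfl, hwalk⟩ := reach_inv M hreach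
  show List.filterMap hh (hw M ++ List.map hAb ts) ∈ M.accepts
  have hfm : (hw M ++ ts.map hAb).filterMap (hh (V := V) (σ := σ)) = ts.filterMap outV := by
    rw [List.filterMap_append, filterMap_hh_hw, filterMap_hh_map_hAb]
    rfl
  rw [hfm]
  rcases ts.eq_nil_or_concat with rfl | ⟨ts₀, b, hsplit⟩
  · -- X = hw M
    have hxa' : hwcore M ++ [hAb (Sum.inl true)] = x' ++ [a] := by
      rw [← hxa]; simp [hw]
    obtain ⟨h1, h2⟩ := List.append_inj' hxa' rfl
    have ha : a = hAb (Sum.inl true) := by injection h2 with h3; exact h3.symm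
    rcases haV with ⟨qa, va, heq, _⟩ | ⟨_, hacc⟩
    · rw [ha] at heq
      exact absurd (congrArg Prod.fst heq) (by simp [hAb])
    · simp only [List.map_nil, List.filterMap_nil]
      rw [DFA.mem_accepts]
      exact hacc
  · rw [List.concat_eq_append] at hsplit
    subst hsplit
    have hxa' : (hw M ++ ts₀.map hAb) ++ [hAb b] = x' ++ [a] := by
      rw [← hxa]; simp
    obtain ⟨h1, h2⟩ := List.append_inj' hxa' rfl
    have ha : a = hAb b := by injection h2 with h3; exact h3.symm
    subst h1
    have hconn : Sum.inl false ∉ (Sum.inl true : Bool ⊕ σ × V) :: (ts₀ ++ [b]) := by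
      intro hmem
      rcases List.mem_cons.1 hmem with h | h
      · exact absurd h (by simp)
      · rcases List.mem_append.1 h with h' | h'
        · exact hhashn (List.mem_append_right _ (List.mem_map.2 ⟨_, h', rfl⟩))
        · simp only [List.mem_singleton] at h'
          rcases haV with ⟨qa, va, heq, _⟩ | ⟨heq, _⟩
          · rw [ha] at heq
            have : b = Sum.inr (qa, va) := congrArg Prod.fst heq
            rw [this] at h'
            exact absurd h' (by simp)
          · rw [ha] at heq
            have : b = Sum.inl true := congrArg Prod.fst heq
            rw [this] at h'
            exact absurd h' (by simp)
    have htrace : TraceOK M M.start (ts₀ ++ [b]) :=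
      walk_to_trace M hwalk hconn (Or.inl ⟨rfl, rfl⟩)
    rcases haV with ⟨qa, va, heq, hacc⟩ | ⟨heq, _⟩
    · have hb : b = Sum.inr (qa, va) := by
        rw [ha] at heq
        exact congrArg Prod.fst heq
      have heval := trace_eval M htrace
        (p := qa) (u := va) (by rw [List.getLast?_concat, hb])
      rw [DFA.mem_accepts]
      show M.evalFrom M.start (List.filterMap outV (ts₀ ++ [b])) ∈ M.accept
      rw [heval]
      exact hacc
    · have hb : b = Sum.inl true := by
        rw [ha] at heq
        exact congrArg Prod.fst heq
      obtain ⟨p, v, hpv⟩ := trace_all_inr M htrace b (List.mem_append_right _ (by simp))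
      rw [hb] at hpv
      exact absurd hpv (by simp)

end Construction

end Aux3

variable {V : Type} [Fintype V]

theorem regular_iff_rHIstar_repr (L : Set (List V)) :
    Language.IsRegular (lang L) ↔
      ∃ (V' : Type) (_ : Fintype V') (bar' : V' → V'),
        (∀ a : V', bar' (bar' a) = a) ∧
        ∃ (hash : V') (V'' : Set V') (w : List V') (h : V' → Option V),
          L = (fun x : List V' => x.filterMap h) ''
            (rHIstar bar' 1 1 w ∩
              {x : List V' | ∃ (x' : List V') (a : V'),
                x = x' ++ [a] ∧ a ∈ V'' ∧ hash ∉ x'}) := by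
  constructor
  · rintro ⟨σ, fσ, M, hM⟩
    letI := fσ
    refine ⟨(Bool ⊕ σ × V) × Bool, by infer_instance, hbar, hbar_invol,
      hAb (Sum.inl false), hV'' M, hw M, hh, ?_⟩
    rw [rHIstar_eq_reach]
    ext x
    constructor
    · intro hx
      exact forward_sub M x (by rw [hM]; exact hx)
    · intro hx
      have := forward_sup M x hx
      rwa [hM] at this
  · rintro ⟨V', fV', bar', hinv, hash, V'', w, h, hL⟩
    letI := fV'
    have hreg1 : Language.IsRegular (rHIstar bar' 1 1 w : Language V') :=
      ⟨_, by infer_instance, hairDFA bar' w, by rw [hairDFA_accepts, rHIstar_eq_reach]⟩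
    have hreg2 : Language.IsRegular
        ({x : List V' | ∃ (x' : List V') (a : V'),
          x = x' ++ [a] ∧ a ∈ V'' ∧ hash ∉ x'} : Language V') :=
      ⟨_, by infer_instance, endDFA hash V'', endDFA_accepts hash V''⟩
    have hreg3 := isRegular_inter_s16 hreg1 hreg2
    have hreg4 := isRegular_image_filterMap hreg3 h
    have heq : ((rHIstar bar' 1 1 w : Language V') ⊓
        ({x : List V' | ∃ (x' : List V') (a : V'),
          x = x' ++ [a] ∧ a ∈ V'' ∧ hash ∉ x'} : Language V') : Language V') =
        (rHIstar bar' 1 1 w ∩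
          {x : List V' | ∃ (x' : List V') (a : V'),
            x = x' ++ [a] ∧ a ∈ V'' ∧ hash ∉ x'} : Set (List V')) := rfl
    rw [heq] at hreg4
    show Language.IsRegular (lang L)
    rw [show lang L = (L : Set (List V)) from rfl, hL]
    exact hreg4


end Hairpin
end
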